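/- arXiv:2309.11391 — 2 statements merged into one kernel-verified Lean document; each statement's English description precedes it below -/
import Mathlib

section
/- With N_t^Ū as above, one has N_t^Ū(0 ⊕ Σ_{i=1}^k a_i e_i) ≤ 2·N_t^Ū(x ⊕ Σ_{i=1}^k a_i e_i) for all x ∈ X and (a_i) ∈ ℝ^k. Consequently N_t^Ū is a norm on X ⊕ ℝ^k extending the norm of X, with respect to which the unit vector basis of ℝ^k is a normalized monotone basis. -/
open Filter Topology
open scoped ZeroAtInfty ENNReal NNReal

/-- Increasing `k`-tuples of naturals: the vertices `[ℕ]^k` of the interlacing graph. -/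
def IncTuple (k : ℕ) := {f : Fin k → ℕ // StrictMono f}

/-- `m₁ ≤ n₁ ≤ m₂ ≤ n₂ ≤ ⋯ ≤ m_k ≤ n_k`. -/
def InterLE {k : ℕ} (m n : Fin k → ℕ) : Prop :=
  (∀ i, m i ≤ n i) ∧ ∀ (i : ℕ) (h : i + 1 < k), n ⟨i, Nat.lt_of_succ_lt h⟩ ≤ m ⟨i + 1, h⟩

/-- The pair `(m, n)` interlaces. -/
def Interlacing {k : ℕ} (m n : Fin k → ℕ) : Prop := InterLE m n ∨ InterLE n m

/-- `m₁ ≤ n₁ < m₂ ≤ n₂ < ⋯ < m_k ≤ n_k`. -/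
def StrongInterLE {k : ℕ} (m n : Fin k → ℕ) : Prop :=
  (∀ i, m i ≤ n i) ∧ ∀ (i : ℕ) (h : i + 1 < k), n ⟨i, Nat.lt_of_succ_lt h⟩ < m ⟨i + 1, h⟩

/-- The pair `(m, n)` is strongly interlacing. -/
def StronglyInterlacing {k : ℕ} (m n : Fin k → ℕ) : Prop :=
  StrongInterLE m n ∨ StrongInterLE n m

/-- The interlacing graph on `[ℕ]^k`. -/
def interGraph (k : ℕ) : SimpleGraph (IncTuple k) where
  Adj m n := m ≠ n ∧ Interlacing m.1 n.1
  symm := ⟨fun _ _ h => ⟨h.1.symm, h.2.symm⟩⟩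
  loopless := ⟨fun _ h => h.1 rfl⟩

/-- The interlacing graph metric `d_I`. -/
noncomputable def dI {k : ℕ} (m n : IncTuple k) : ℕ := (interGraph k).dist m n

/-- All entries of the tuple belong to `L`. -/
def memAll {k : ℕ} (L : Set ℕ) (m : IncTuple k) : Prop := ∀ i, m.1 i ∈ L

/-- `m̄ < n̄`: every entry of `m` is below every entry of `n`. -/
def ordLT {k : ℕ} (m n : IncTuple k) : Prop := ∀ i j, m.1 i < n.1 j

/-- Kalton's `Q(ε, δ)`-property of a metric space. -/
def HasQProp (M : Type*) [MetricSpace M] (ε δ : ℝ) : Prop :=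
  ∀ (k : ℕ) (f : IncTuple k → M),
    (∀ m n : IncTuple k, dist (f m) (f n) ≤ δ * dI m n) →
    ∃ L : Set ℕ, L.Infinite ∧ ∀ m n : IncTuple k, memAll L m → memAll L n → ordLT m n →
      dist (f m) (f n) < ε

/-- The modulus `Δ_M(ε)`. -/
noncomputable def DeltaMod (M : Type*) [MetricSpace M] (ε : ℝ) : ℝ :=
  sSup {δ : ℝ | 0 ≤ δ ∧ HasQProp M ε δ}

/-- The constant `q_M`. -/
noncomputable def qMod (M : Type*) [MetricSpace M] : ℝ :=
  sSup {c : ℝ | 0 ≤ c ∧ ∀ ε : ℝ, 0 < ε → c * ε ≤ DeltaMod M ε}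

/-- Boundedness of a map into a metric space. -/
def IsBddMap {α : Type*} {M : Type*} [MetricSpace M] (f : α → M) : Prop :=
  ∃ R : ℝ, ∀ x y, dist (f x) (f y) ≤ R

/-- Property `Q` with constant `C`: every Lipschitz map on an interlacing graph
concentrates on `[L]^k` up to `C·Lip(f)`. -/
def HasPropQConst (M : Type*) [MetricSpace M] (C : ℝ) : Prop :=
  ∀ (k : ℕ) (f : IncTuple k → M) (K : ℝ), 0 ≤ K →
    (∀ m n : IncTuple k, dist (f m) (f n) ≤ K * dI m n) →
    ∃ L : Set ℕ, L.Infinite ∧ ∀ m n : IncTuple k, memAll L m → memAll L n →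
      dist (f m) (f n) ≤ C * K

/-- Property `Q`. -/
def HasPropQ (M : Type*) [MetricSpace M] : Prop := ∃ C : ℝ, 0 ≤ C ∧ HasPropQConst M C

/-- The property `Q` constant `Q_M`. -/
noncomputable def QConst (M : Type*) [MetricSpace M] : ℝ :=
  sInf {C : ℝ | 0 ≤ C ∧ HasPropQConst M C}

theorem compl_card {l m : ℕ} (P : Finset (Fin (l + m))) (hP : P.card = l) : Pᶜ.card = m := by
  rw [Finset.card_compl, hP, Fintype.card_fin]; omega

/-- The increasing subtuple `(n_i : i ∈ P)`. -/
def subTuple {k j : ℕ} (n : Fin k → ℕ) (P : Finset (Fin k)) (h : P.card = j) :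
    Fin j → ℕ := fun i => n (P.orderEmbOfFin h i)

/-- The set of distances `d_M(f(n_i : i ∈ P), g(n_i : i ∈ P^c))` over `n̄ ∈ [L]^{l+m}`. -/
def cutDistSet {l m : ℕ} {M : Type*} [MetricSpace M]
    (f : (Fin l → ℕ) → M) (g : (Fin m → ℕ) → M) (L : Set ℕ)
    (P : Finset (Fin (l + m))) (hP : P.card = l) : Set ℝ :=
  {d : ℝ | ∃ n : Fin (l + m) → ℕ, StrictMono n ∧ (∀ i, n i ∈ L) ∧
    d = dist (f (subTuple n P hP)) (g (subTuple n Pᶜ (compl_card P hP)))}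

/-- `C`-cut stability. -/
def CutStableWith (M : Type*) [MetricSpace M] (C : ℝ) : Prop :=
  ∀ (l m : ℕ) (f : (Fin l → ℕ) → M) (g : (Fin m → ℕ) → M),
    IsBddMap f → IsBddMap g → ∀ L : Set ℕ, L.Infinite →
    ∀ (P Q : Finset (Fin (l + m))) (hP : P.card = l) (hQ : Q.card = l),
      sInf (cutDistSet f g L P hP) ≤ C * sSup (cutDistSet f g L Q hQ)

/-- A permutation of `{1,…,l+m}` preserving the order on `{1,…,l}` and on `{l+1,…,l+m}`. -/
def OrderPreservingPerm {l m : ℕ} (π : Equiv.Perm (Fin (l + m))) : Prop :=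
  StrictMono (fun i : Fin l => π (Fin.castAdd m i)) ∧
  StrictMono (fun j : Fin m => π (Fin.natAdd l j))

/-- Distances `d_M(f(n_{π(1)},…,n_{π(l)}), g(n_{π(l+1)},…,n_{π(l+m)}))` over `n̄ ∈ [L]^{l+m}`. -/
def permDistSet {l m : ℕ} {M : Type*} [MetricSpace M]
    (f : (Fin l → ℕ) → M) (g : (Fin m → ℕ) → M) (L : Set ℕ)
    (π : Equiv.Perm (Fin (l + m))) : Set ℝ :=
  {d : ℝ | ∃ n : Fin (l + m) → ℕ, StrictMono n ∧ (∀ i, n i ∈ L) ∧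
    d = dist (f (fun i => n (π (Fin.castAdd m i)))) (g (fun j => n (π (Fin.natAdd l j))))}

/-- `C`-upper stability. -/
def UpperStableWith (M : Type*) [MetricSpace M] (C : ℝ) : Prop :=
  ∀ (l m : ℕ) (f : (Fin l → ℕ) → M) (g : (Fin m → ℕ) → M),
    IsBddMap f → IsBddMap g → ∀ L : Set ℕ, L.Infinite →
    ∀ π : Equiv.Perm (Fin (l + m)), OrderPreservingPerm π →
      sInf (permDistSet f g L (Equiv.refl _)) ≤ C * sSup (permDistSet f g L π)

/-- The modulus of continuity `ω_h`. -/
noncomputable def omegaMod {M N : Type*} [MetricSpace M] [MetricSpace N] (h : M → N)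
    (t : ℝ) : ℝ≥0∞ :=
  ⨆ p : {p : M × M // dist p.1 p.2 ≤ t}, edist (h p.1.1) (h p.1.2)

/-- The compression modulus `ρ_h`. -/
noncomputable def rhoMod {M N : Type*} [MetricSpace M] [MetricSpace N] (h : M → N)
    (t : ℝ) : ℝ≥0∞ :=
  ⨅ p : {p : M × M // t ≤ dist p.1 p.2}, edist (h p.1.1) (h p.1.2)

/-- A coarse embedding, expressed via the moduli. -/
def CoarseEmbMod {M N : Type*} [MetricSpace M] [MetricSpace N] (h : M → N) : Prop :=
  (∀ t : ℝ, omegaMod h t < ⊤) ∧ Tendsto (rhoMod h) atTop (𝓝 ⊤)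

/-- A uniform embedding, expressed via the moduli. -/
def UniformEmbMod {M N : Type*} [MetricSpace M] [MetricSpace N] (h : M → N) : Prop :=
  Tendsto (omegaMod h) (𝓝[>] (0 : ℝ)) (𝓝 0) ∧ ∀ t : ℝ, 0 < t → 0 < rhoMod h t

/-- A free ultrafilter on `ℕ`. -/
def FreeUF (U : Ultrafilter ℕ) : Prop := (U : Filter ℕ) ≤ Filter.cofinite

/-- The iterated ultrafilter limit `lim_{n₁,U₁} ⋯ lim_{n_k,U_k} F(n₁,…,n_k)`. -/
noncomputable def ultraLim : (k : ℕ) → (Fin k → Ultrafilter ℕ) → ((Fin k → ℕ) → ℝ) → ℝ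
  | 0, _, F => F (fun i => i.elim0)
  | k + 1, U, F => ultraLim k (fun i => U i.castSucc)
      (fun n => limUnder (U (Fin.last k)) (fun j => F (Fin.snoc n j)))

/-- An unrooted (countably branching) tree of height `k` in `X`. -/
def TreeU (X : Type*) (k : ℕ) := (i : Fin k) → (Fin (i.1 + 1) → ℕ) → X

/-- A rooted (countably branching) tree of height `k` in `X`. -/
def TreeR (X : Type*) (k : ℕ) := (i : Fin (k + 1)) → (Fin i.1 → ℕ) → X

/-- A normalized unrooted tree takes values in the unit sphere. -/
def NormalizedU {X : Type*} [NormedAddCommGroup X] {k : ℕ} (t : TreeU X k) : Prop :=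
  ∀ i v, ‖t i v‖ = 1

/-- A normalized rooted tree takes values in the unit sphere. -/
def NormalizedR {X : Type*} [NormedAddCommGroup X] {k : ℕ} (t : TreeR X k) : Prop :=
  ∀ i v, ‖t i v‖ = 1

/-- `∀_{U₁} n₁ ⋯ ∀_{U_j} n_j, P(n₁,…,n_j)`. -/
def iterEventually : (j : ℕ) → (Fin j → Ultrafilter ℕ) → ((Fin j → ℕ) → Prop) → Prop
  | 0, _, P => P (fun i => i.elim0)
  | j + 1, U, P => iterEventually j (fun i => U i.castSucc)
      (fun n => ∀ᶠ a in U (Fin.last j), P (Fin.snoc n a))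

/-- An unrooted tree is `Ū`-weakly null. -/
def WeaklyNullU {X : Type*} [NormedAddCommGroup X] [NormedSpace ℝ X] {k : ℕ}
    (U : Fin k → Ultrafilter ℕ) (t : TreeU X k) : Prop :=
  ∀ i : Fin k, iterEventually i.1 (fun j => U (Fin.castLE i.isLt.le j))
    (fun pre => ∀ φ : X →L[ℝ] ℝ,
      Tendsto (fun a : ℕ => φ (t i (Fin.snoc pre a))) (U i) (𝓝 0))

/-- A rooted tree is `Ū`-weakly null. -/
def WeaklyNullR {X : Type*} [NormedAddCommGroup X] [NormedSpace ℝ X] {k : ℕ}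
    (U : Fin k → Ultrafilter ℕ) (t : TreeR X k) : Prop :=
  ∀ i : Fin k, iterEventually i.1 (fun j => U (Fin.castLE i.isLt.le j))
    (fun pre => ∀ φ : X →L[ℝ] ℝ,
      Tendsto (fun a : ℕ => φ (t i.succ (Fin.snoc pre a))) (U i) (𝓝 0))

/-- The norm `N_t^{Ū}(x ⊕ Σ aᵢ eᵢ)`. -/
noncomputable def treeNorm {X : Type*} [NormedAddCommGroup X] [NormedSpace ℝ X] {k : ℕ}
    (U : Fin k → Ultrafilter ℕ) (t : TreeU X k) (x : X) (a : Fin k → ℝ) : ℝ :=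
  ultraLim k U (fun n => ‖x + ∑ i : Fin k, a i • t i (fun j => n (Fin.castLE i.isLt j))‖)

/-- The number of elements of `P` that are `≤ j`. -/
def rankIn {k : ℕ} (P : Finset (Fin k)) (j : Fin k) : ℕ :=
  (P.filter (fun i => i ≤ j)).card

/-- The `P`-intertwining `s ⊛_P t` of two trees. -/
def intertwine {X : Type*} {l m : ℕ} (P : Finset (Fin (l + m))) (hP : P.card = l)
    (s : TreeU X l) (t : TreeU X m) : TreeU X (l + m) := fun j v =>
  let v' : Fin (l + m) → ℕ := fun p => if h : p.1 < j.1 + 1 then v ⟨p.1, h⟩ else 0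
  if hj : j ∈ P then
    s ⟨rankIn P j - 1, by
        have h1 : 0 < rankIn P j :=
          Finset.card_pos.mpr ⟨j, Finset.mem_filter.mpr ⟨hj, le_refl j⟩⟩
        have h2 : rankIn P j ≤ l := (Finset.card_filter_le P _).trans hP.le
        omega⟩
      (fun b => v' (P.orderEmbOfFin hP ⟨b.1, by
        have h1 : 0 < rankIn P j :=
          Finset.card_pos.mpr ⟨j, Finset.mem_filter.mpr ⟨hj, le_refl j⟩⟩
        have h2 : rankIn P j ≤ l := (Finset.card_filter_le P _).trans hP.le
        have h3 := b.isLt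
        omega⟩))
  else
    t ⟨rankIn Pᶜ j - 1, by
        have h1 : 0 < rankIn Pᶜ j :=
          Finset.card_pos.mpr ⟨j, Finset.mem_filter.mpr ⟨Finset.mem_compl.mpr hj, le_refl j⟩⟩
        have h2 : rankIn Pᶜ j ≤ m := (Finset.card_filter_le Pᶜ _).trans (compl_card P hP).le
        omega⟩
      (fun b => v' (Pᶜ.orderEmbOfFin (compl_card P hP) ⟨b.1, by
        have h1 : 0 < rankIn Pᶜ j :=
          Finset.card_pos.mpr ⟨j, Finset.mem_filter.mpr ⟨Finset.mem_compl.mpr hj, le_refl j⟩⟩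
        have h2 : rankIn Pᶜ j ≤ m := (Finset.card_filter_le Pᶜ _).trans (compl_card P hP).le
        have h3 := b.isLt
        omega⟩))

/-- The unrooted part of a rooted tree. -/
def unroot {X : Type*} {k : ℕ} (t : TreeR X k) : TreeU X k := fun i v => t i.succ v

/-- The summing basis of `c₀`. -/
noncomputable def summingBasis (n : ℕ) : C₀(ℕ, ℝ) :=
  ⟨⟨fun x => if x ≤ n then 1 else 0, continuous_of_discreteTopology⟩, by
    rw [cocompact_eq_cofinite, Nat.cofinite_eq_atTop]
    refine (tendsto_congr' ?_).mpr tendsto_const_nhds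
    filter_upwards [eventually_gt_atTop n] with x hx
    simp [if_neg (not_le.mpr hx)]⟩

/-- The canonical map `[ℕ]^k → c₀`, `n̄ ↦ Σᵢ s_{nᵢ}`. -/
noncomputable def interMap {k : ℕ} (m : Fin k → ℕ) : C₀(ℕ, ℝ) :=
  ∑ i : Fin k, summingBasis (m i)

/-- Krivine–Maurey stability of a metric space. -/
def StableSpace (M : Type*) [MetricSpace M] : Prop :=
  ∀ U V : Ultrafilter ℕ, FreeUF U → FreeUF V →
    ∀ x y : ℕ → M, Bornology.IsBounded (Set.range x) → Bornology.IsBounded (Set.range y) →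
      limUnder (U : Filter ℕ) (fun a => limUnder (V : Filter ℕ) (fun b => dist (x a) (y b)))
        = limUnder (V : Filter ℕ) (fun b => limUnder (U : Filter ℕ) (fun a => dist (x a) (y b)))

section Aux

private lemma uf_lim_exists (U : Ultrafilter ℕ) (g : ℕ → ℝ) (R : ℝ) (h : ∀ n, |g n| ≤ R) :
    Tendsto g (U : Filter ℕ) (𝓝 (limUnder (U : Filter ℕ) g)) ∧
      |limUnder (U : Filter ℕ) g| ≤ R := by
  have hmem : Set.Icc (-R) R ∈ Ultrafilter.map g U :=
    Filter.mem_map.2 (Filter.univ_mem' (fun n => Set.mem_Icc.2 (abs_le.1 (h n))))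
  obtain ⟨a, haI, hle⟩ := isCompact_Icc.ultrafilter_le_nhds (Ultrafilter.map g U)
    (le_principal_iff.2 hmem)
  have ht : Tendsto g (U : Filter ℕ) (𝓝 a) := by
    rw [Tendsto, ← Ultrafilter.coe_map]; exact hle
  have he : limUnder (U : Filter ℕ) g = a := ht.limUnder_eq
  rw [he]
  exact ⟨ht, abs_le.2 ⟨haI.1, haI.2⟩⟩

private lemma iterEvForall : ∀ (j : ℕ) (U : Fin j → Ultrafilter ℕ)
    (P : (Fin j → ℕ) → Prop), (∀ n, P n) → iterEventually j U P
  | 0, _, _, h => h _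
  | j + 1, U, P, h => iterEvForall j _ _
      (fun n => Filter.Eventually.of_forall (fun a => h _))

private lemma iterEvMono : ∀ (j : ℕ) (U : Fin j → Ultrafilter ℕ)
    (P Q : (Fin j → ℕ) → Prop), (∀ n, P n → Q n) →
    iterEventually j U P → iterEventually j U Q
  | 0, _, _, _, h, hP => h _ hP
  | j + 1, U, P, Q, h, hP => iterEvMono j _ _ _ (fun n hn => hn.mono (fun a => h _)) hP

private lemma ultraLim_mono : ∀ (j : ℕ) (U : Fin j → Ultrafilter ℕ)
    (F G : (Fin j → ℕ) → ℝ) (R : ℝ), (∀ n, |F n| ≤ R) → (∀ n, |G n| ≤ R) →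
    iterEventually j U (fun n => F n ≤ G n) → ultraLim j U F ≤ ultraLim j U G
  | 0, _, _, _, _, _, _, h => h
  | j + 1, U, F, G, R, hF, hG, h => by
    show ultraLim j _ _ ≤ ultraLim j _ _
    refine ultraLim_mono j _ _ _ R
      (fun n => (uf_lim_exists _ _ R (fun a => hF _)).2)
      (fun n => (uf_lim_exists _ _ R (fun a => hG _)).2)
      (iterEvMono j _ _ _ (fun n hn => ?_) h)
    exact le_of_tendsto_of_tendsto
      (uf_lim_exists _ (fun a => F (Fin.snoc n a)) R (fun a => hF _)).1
      (uf_lim_exists _ (fun a => G (Fin.snoc n a)) R (fun a => hG _)).1 hn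

private lemma ultraLim_const : ∀ (j : ℕ) (U : Fin j → Ultrafilter ℕ) (c : ℝ),
    ultraLim j U (fun _ => c) = c
  | 0, _, _ => rfl
  | j + 1, U, c => by
    show ultraLim j _ (fun n => limUnder _ (fun _ : ℕ => c)) = c
    have : (fun n : Fin j → ℕ => limUnder (U (Fin.last j) : Filter ℕ) (fun _ : ℕ => c))
        = fun _ => c := funext fun n => Filter.Tendsto.limUnder_eq tendsto_const_nhds
    rw [this]; exact ultraLim_const j _ c

private lemma ultraLim_add : ∀ (j : ℕ) (U : Fin j → Ultrafilter ℕ)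
    (F G : (Fin j → ℕ) → ℝ) (R S : ℝ), (∀ n, |F n| ≤ R) → (∀ n, |G n| ≤ S) →
    ultraLim j U (fun n => F n + G n) = ultraLim j U F + ultraLim j U G
  | 0, _, _, _, _, _, _, _ => rfl
  | j + 1, U, F, G, R, S, hF, hG => by
    show ultraLim j _ _ = ultraLim j _ _ + ultraLim j _ _
    have e : (fun n : Fin j → ℕ => limUnder (U (Fin.last j) : Filter ℕ)
          (fun a => F (Fin.snoc n a) + G (Fin.snoc n a)))
        = fun n => limUnder (U (Fin.last j) : Filter ℕ) (fun a => F (Fin.snoc n a))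
          + limUnder (U (Fin.last j) : Filter ℕ) (fun a => G (Fin.snoc n a)) := by
      funext n
      exact Filter.Tendsto.limUnder_eq
        ((uf_lim_exists _ (fun a => F (Fin.snoc n a)) R (fun a => hF _)).1.add
         (uf_lim_exists _ (fun a => G (Fin.snoc n a)) S (fun a => hG _)).1)
    rw [e]
    exact ultraLim_add j _ _ _ R S
      (fun n => (uf_lim_exists _ _ R (fun a => hF _)).2)
      (fun n => (uf_lim_exists _ _ S (fun a => hG _)).2)

private lemma ultraLim_cmul : ∀ (j : ℕ) (U : Fin j → Ultrafilter ℕ)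
    (F : (Fin j → ℕ) → ℝ) (R c : ℝ), (∀ n, |F n| ≤ R) →
    ultraLim j U (fun n => c * F n) = c * ultraLim j U F
  | 0, _, _, _, _, _ => rfl
  | j + 1, U, F, R, c, hF => by
    show ultraLim j _ _ = c * ultraLim j _ _
    have e : (fun n : Fin j → ℕ => limUnder (U (Fin.last j) : Filter ℕ)
          (fun a => c * F (Fin.snoc n a)))
        = fun n => c * limUnder (U (Fin.last j) : Filter ℕ) (fun a => F (Fin.snoc n a)) := by
      funext n
      exact Filter.Tendsto.limUnder_eq
        ((uf_lim_exists _ (fun a => F (Fin.snoc n a)) R (fun a => hF _)).1.const_mul c)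
    rw [e]
    exact ultraLim_cmul j _ _ R c (fun n => (uf_lim_exists _ _ R (fun a => hF _)).2)

private lemma ultraLim_cast : ∀ (k j : ℕ) (h : j ≤ k) (U : Fin k → Ultrafilter ℕ)
    (F : (Fin j → ℕ) → ℝ),
    ultraLim k U (fun n => F (fun i => n (Fin.castLE h i))) =
      ultraLim j (fun i => U (Fin.castLE h i)) F := by
  intro k
  induction k with
  | zero =>
    intro j h U F
    have hj : j = 0 := Nat.le_zero.1 h
    subst hj
    exact congrArg F (funext fun i => i.elim0)
  | succ k ih =>
    intro j h U F
    rcases Nat.lt_or_ge j (k + 1) with hj | hj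
    · have hjk : j ≤ k := by omega
      show ultraLim k _ _ = _
      have e : (fun n : Fin k → ℕ => limUnder (U (Fin.last k) : Filter ℕ)
            (fun a => F (fun i => (Fin.snoc n a : Fin (k + 1) → ℕ) (Fin.castLE h i))))
          = fun n => F (fun i => n (Fin.castLE hjk i)) := by
        funext n
        have harg : ∀ a : ℕ,
            (fun i : Fin j => (Fin.snoc n a : Fin (k + 1) → ℕ) (Fin.castLE h i))
              = fun i => n (Fin.castLE hjk i) := by
          intro a; funext i
          rw [show Fin.castLE h i = Fin.castSucc (Fin.castLE hjk i) from rfl,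
            Fin.snoc_castSucc]
        simp only [harg]
        exact Filter.Tendsto.limUnder_eq tendsto_const_nhds
      rw [e]
      exact ih j hjk _ F
    · have hj' : j = k + 1 := by omega
      subst hj'
      rfl

/-- The norming function pushed down to the first `j` coordinates. -/
private noncomputable def downF {X : Type*} [NormedAddCommGroup X] [NormedSpace ℝ X] {k : ℕ}
    (t : TreeU X k) (x : X) (a : Fin k → ℝ) (j : ℕ) (v : Fin j → ℕ) : ℝ :=
  ‖x + ∑ i : Fin k, if hi : i.1 + 1 ≤ j then
      a i • t i (fun p => v (Fin.castLE hi p)) else 0‖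

private lemma downF_bound {X : Type*} [NormedAddCommGroup X] [NormedSpace ℝ X] {k : ℕ}
    (t : TreeU X k) (ht : NormalizedU t) (x : X) (a : Fin k → ℝ) (j : ℕ) (v : Fin j → ℕ) :
    |downF t x a j v| ≤ ‖x‖ + ∑ i, |a i| := by
  unfold downF
  rw [abs_of_nonneg (norm_nonneg _)]
  refine (norm_add_le _ _).trans (add_le_add_right ?_ _)
  refine (norm_sum_le _ _).trans (Finset.sum_le_sum fun i _ => ?_)
  by_cases hi : i.1 + 1 ≤ j
  · rw [dif_pos hi, norm_smul, ht, mul_one, Real.norm_eq_abs]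
  · rw [dif_neg hi, norm_zero]; exact abs_nonneg _

private lemma normF_bound {X : Type*} [NormedAddCommGroup X] [NormedSpace ℝ X] {k : ℕ}
    (t : TreeU X k) (ht : NormalizedU t) (x : X) (a : Fin k → ℝ) (n : Fin k → ℕ) :
    |‖x + ∑ i : Fin k, a i • t i (fun p => n (Fin.castLE i.isLt p))‖| ≤ ‖x‖ + ∑ i, |a i| := by
  rw [abs_of_nonneg (norm_nonneg _)]
  refine (norm_add_le _ _).trans (add_le_add_right ?_ _)
  refine (norm_sum_le _ _).trans (Finset.sum_le_sum fun i _ => ?_)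
  rw [norm_smul, ht, mul_one, Real.norm_eq_abs]

private lemma treeNorm_eq_down {X : Type*} [NormedAddCommGroup X] [NormedSpace ℝ X] {k : ℕ}
    (U : Fin k → Ultrafilter ℕ) (t : TreeU X k) (x : X) (a : Fin k → ℝ) (j : ℕ) (h : j ≤ k)
    (ha : ∀ i : Fin k, ¬ i.1 + 1 ≤ j → a i = 0) :
    treeNorm U t x a = ultraLim j (fun i => U (Fin.castLE h i)) (downF t x a j) := by
  rw [← ultraLim_cast k j h U (downF t x a j)]
  unfold treeNorm
  congr 1
  funext n
  unfold downF
  congr 2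
  refine Finset.sum_congr rfl fun i _ => ?_
  by_cases hi : i.1 + 1 ≤ j
  · rw [dif_pos hi]; rfl
  · rw [dif_neg hi, ha i hi, zero_smul]

private lemma treeNorm_drop {X : Type*} [NormedAddCommGroup X] [NormedSpace ℝ X] {k : ℕ}
    (U : Fin k → Ultrafilter ℕ) (t : TreeU X k) (ht : NormalizedU t) (hw : WeaklyNullU U t)
    (x : X) (a : Fin k → ℝ) (j : Fin k) (ha : ∀ i, j < i → a i = 0) :
    treeNorm U t x (Function.update a j 0) ≤ treeNorm U t x a := by
  have h0 : j.1 ≤ k := j.isLt.le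
  have h1 : j.1 + 1 ≤ k := j.isLt
  set R : ℝ := ‖x‖ + ∑ i, |a i| with hR
  have habs : ∀ i, |Function.update a j 0 i| ≤ |a i| := by
    intro i; by_cases hij : i = j
    · subst hij; rw [Function.update_self, abs_zero]; exact abs_nonneg _
    · rw [Function.update_of_ne hij]
  have hRle : ‖x‖ + ∑ i, |Function.update a j 0 i| ≤ R :=
    add_le_add_right (Finset.sum_le_sum fun i _ => habs i) _
  have hLHS := treeNorm_eq_down U t x (Function.update a j 0) j.1 h0 (by
    intro i hi
    by_cases hij : i = j
    · subst hij; exact Function.update_self i 0 a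
    · rw [Function.update_of_ne hij]
      refine ha i (Fin.lt_def.2 ?_)
      have : i.1 ≠ j.1 := fun hh => hij (Fin.ext hh)
      omega)
  have hRHS := treeNorm_eq_down U t x a (j.1 + 1) h1 (by
    intro i hi
    refine ha i (Fin.lt_def.2 (by omega)))
  rw [hLHS, hRHS]
  show ultraLim j.1 (fun i => U (Fin.castLE h0 i)) (downF t x (Function.update a j 0) j.1)
      ≤ ultraLim j.1 (fun i => U (Fin.castLE h0 i))
        (fun v => limUnder (U j : Filter ℕ) (fun b => downF t x a (j.1 + 1) (Fin.snoc v b)))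
  refine ultraLim_mono j.1 _ _ _ R
    (fun v => (downF_bound t ht x _ j.1 v).trans hRle)
    (fun v => (uf_lim_exists (U j) _ R (fun b => downF_bound t ht x a _ _)).2)
    (iterEvMono j.1 _ _ _ ?_ (hw j))
  intro v hweak
  have key : ∃ y : X, downF t x (Function.update a j 0) j.1 v = ‖y‖ ∧
      ∀ b : ℕ, downF t x a (j.1 + 1) (Fin.snoc v b) = ‖y + a j • t j (Fin.snoc v b)‖ := by
    refine ⟨x + ∑ i : Fin k, (if hi : i.1 + 1 ≤ j.1 then
        Function.update a j 0 i • t i (fun p => v (Fin.castLE hi p)) else 0), rfl, ?_⟩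
    intro b
    unfold downF
    have hsum : (∑ i : Fin k, if hi : i.1 + 1 ≤ j.1 + 1 then
          a i • t i (fun p => (Fin.snoc v b : Fin (j.1 + 1) → ℕ) (Fin.castLE hi p)) else 0)
        = (∑ i : Fin k, if hi : i.1 + 1 ≤ j.1 then
            Function.update a j 0 i • t i (fun p => v (Fin.castLE hi p)) else 0)
          + a j • t j (Fin.snoc v b) := by
      rw [← Finset.sum_erase_add Finset.univ _ (Finset.mem_univ j),
          ← Finset.sum_erase_add Finset.univ
            (fun i : Fin k => if hi : i.1 + 1 ≤ j.1 then
              Function.update a j 0 i • t i (fun p => v (Fin.castLE hi p)) else 0)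
            (Finset.mem_univ j)]
      rw [show (if hi : j.1 + 1 ≤ j.1 then
          Function.update a j 0 j • t j (fun p => v (Fin.castLE hi p)) else 0) = 0
        from dif_neg (by omega), add_zero]
      congr 1
      · refine Finset.sum_congr rfl fun i hi => ?_
        have hij : i ≠ j := Finset.ne_of_mem_erase hi
        by_cases hlt : i.1 + 1 ≤ j.1
        · rw [dif_pos (by omega : i.1 + 1 ≤ j.1 + 1), dif_pos hlt,
            Function.update_of_ne hij]
          exact congrArg (a i • t i ·) (funext fun p =>
            Fin.snoc_castSucc (α := fun _ : Fin (j.1 + 1) => ℕ) b v (Fin.castLE hlt p))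
        · have hne : i.1 ≠ j.1 := fun hh => hij (Fin.ext hh)
          rw [dif_neg (by omega : ¬ i.1 + 1 ≤ j.1 + 1), dif_neg hlt]
      · exact dif_pos le_rfl
    rw [hsum, ← add_assoc]
  obtain ⟨y, hy1, hy2⟩ := key
  rw [hy1]
  obtain ⟨φ, hφ1, hφy⟩ := exists_dual_vector'' ℝ y
  have hφy' : φ y = ‖y‖ := hφy
  have hten : Tendsto (fun b => ‖y‖ + a j * φ (t j (Fin.snoc v b))) (U j : Filter ℕ)
      (𝓝 (‖y‖ + a j * 0)) := tendsto_const_nhds.add ((hweak φ).const_mul (a j))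
  rw [mul_zero, add_zero] at hten
  have hDlim := (uf_lim_exists (U j) (fun b => downF t x a (j.1 + 1) (Fin.snoc v b)) R
    (fun b => downF_bound t ht x a _ _)).1
  refine le_of_tendsto_of_tendsto' hten hDlim ?_
  intro b
  rw [hy2 b]
  have heq : ‖y‖ + a j * φ (t j (Fin.snoc v b)) = φ (y + a j • t j (Fin.snoc v b)) := by
    rw [map_add, map_smul, smul_eq_mul, hφy']
  rw [heq]
  refine (le_abs_self _).trans ?_
  rw [← Real.norm_eq_abs]
  refine (φ.le_opNorm _).trans ?_
  calc ‖φ‖ * ‖y + a j • t j (Fin.snoc v b)‖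
      ≤ 1 * ‖y + a j • t j (Fin.snoc v b)‖ :=
        mul_le_mul_of_nonneg_right hφ1 (norm_nonneg _)
    _ = ‖y + a j • t j (Fin.snoc v b)‖ := one_mul _

private lemma treeNorm_trunc {X : Type*} [NormedAddCommGroup X] [NormedSpace ℝ X] {k : ℕ}
    (U : Fin k → Ultrafilter ℕ) (t : TreeU X k) (ht : NormalizedU t) (hw : WeaklyNullU U t)
    (x : X) (a : Fin k → ℝ) :
    ∀ (d j : ℕ), j + d ≤ k →
      treeNorm U t x (fun i => if i.1 < j then a i else 0)
        ≤ treeNorm U t x (fun i => if i.1 < j + d then a i else 0) := by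
  intro d
  induction d with
  | zero => intro j h; exact le_refl _
  | succ d ihd =>
    intro j h
    refine (ihd j (by omega)).trans ?_
    have hdrop := treeNorm_drop U t ht hw x
      (fun i => if i.1 < j + d + 1 then a i else 0) ⟨j + d, by omega⟩
      (fun i hi => if_neg (by
        have h2 : j + d < i.1 := by simpa [Fin.lt_def] using hi
        omega))
    have hupd : Function.update (fun i : Fin k => if i.1 < j + d + 1 then a i else 0)
        ⟨j + d, by omega⟩ 0 = fun i : Fin k => if i.1 < j + d then a i else 0 := by
      funext i
      by_cases hij : i = (⟨j + d, by omega⟩ : Fin k)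
      · subst hij
        rw [Function.update_self, if_neg (Nat.lt_irrefl _)]
      · rw [Function.update_of_ne hij]
        have hne : i.1 ≠ j + d := fun hh => hij (Fin.ext hh)
        by_cases hlt : i.1 < j + d
        · rw [if_pos (by omega), if_pos hlt]
        · rw [if_neg (by omega), if_neg hlt]
    calc treeNorm U t x (fun i => if i.1 < j + d then a i else 0)
        = treeNorm U t x (Function.update
            (fun i : Fin k => if i.1 < j + d + 1 then a i else 0) ⟨j + d, by omega⟩ 0) := by
          rw [hupd]
      _ ≤ _ := hdrop

end Aux

/-- `N_t^{Ū}(0 ⊕ Σ aᵢ eᵢ) ≤ 2 N_t^{Ū}(x ⊕ Σ aᵢ eᵢ)`; consequently `N_t^{Ū}` is a norm on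
`X ⊕ ℝ^k` extending the norm of `X`, for which `(eᵢ)` is a normalized monotone basis. -/
theorem stmt12 (X : Type*) [NormedAddCommGroup X] [NormedSpace ℝ X] [CompleteSpace X]
    (k : ℕ) (U : Fin k → Ultrafilter ℕ) (hU : ∀ i, FreeUF (U i))
    (t : TreeU X k) (ht : NormalizedU t) (hw : WeaklyNullU U t) :
    (∀ (x : X) (a : Fin k → ℝ), treeNorm U t 0 a ≤ 2 * treeNorm U t x a) ∧
    (∀ x : X, treeNorm U t x 0 = ‖x‖) ∧
    (∀ (c : ℝ) (x : X) (a : Fin k → ℝ),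
      treeNorm U t (c • x) (c • a) = |c| * treeNorm U t x a) ∧
    (∀ (x₁ x₂ : X) (a₁ a₂ : Fin k → ℝ),
      treeNorm U t (x₁ + x₂) (a₁ + a₂) ≤ treeNorm U t x₁ a₁ + treeNorm U t x₂ a₂) ∧
    (∀ (x : X) (a : Fin k → ℝ), treeNorm U t x a = 0 → x = 0 ∧ a = 0) ∧
    (∀ i : Fin k, treeNorm U t 0 (Pi.single i 1) = 1) ∧
    (∀ (x : X) (a : Fin k → ℝ) (j : ℕ), j ≤ k →
      treeNorm U t x (fun i => if i.1 < j then a i else 0) ≤ treeNorm U t x a) := by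
  have part7 : ∀ (x : X) (a : Fin k → ℝ) (j : ℕ), j ≤ k →
      treeNorm U t x (fun i => if i.1 < j then a i else 0) ≤ treeNorm U t x a := by
    intro x a j hj
    have h := treeNorm_trunc U t ht hw x a (k - j) j (by omega)
    have he : (fun i : Fin k => if i.1 < j + (k - j) then a i else 0) = a := by
      funext i; rw [if_pos (by have := i.isLt; omega)]
    rwa [he] at h
  have part2 : ∀ x : X, treeNorm U t x 0 = ‖x‖ := by
    intro x
    unfold treeNorm
    have e : (fun n : Fin k → ℕ =>
        ‖x + ∑ i : Fin k, (0 : Fin k → ℝ) i • t i (fun p => n (Fin.castLE i.isLt p))‖)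
        = fun _ => ‖x‖ := by funext n; simp
    rw [e, ultraLim_const]
  have part3 : ∀ (c : ℝ) (x : X) (a : Fin k → ℝ),
      treeNorm U t (c • x) (c • a) = |c| * treeNorm U t x a := by
    intro c x a
    unfold treeNorm
    have e : (fun n : Fin k → ℕ =>
        ‖c • x + ∑ i : Fin k, (c • a) i • t i (fun p => n (Fin.castLE i.isLt p))‖)
        = fun n : Fin k → ℕ =>
          |c| * ‖x + ∑ i : Fin k, a i • t i (fun p => n (Fin.castLE i.isLt p))‖ := by
      funext n
      rw [← Real.norm_eq_abs, ← norm_smul]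
      congr 1
      rw [smul_add, Finset.smul_sum]
      congr 1
      refine Finset.sum_congr rfl fun i _ => ?_
      rw [Pi.smul_apply, smul_smul]
      rfl
    rw [e, ultraLim_cmul k U _ (‖x‖ + ∑ i, |a i|) |c| (fun n => normF_bound t ht x a n)]
  have part4 : ∀ (x₁ x₂ : X) (a₁ a₂ : Fin k → ℝ),
      treeNorm U t (x₁ + x₂) (a₁ + a₂) ≤ treeNorm U t x₁ a₁ + treeNorm U t x₂ a₂ := by
    intro x₁ x₂ a₁ a₂
    have hpt : ∀ n : Fin k → ℕ,
        ‖(x₁ + x₂) + ∑ i : Fin k, (a₁ + a₂) i • t i (fun p => n (Fin.castLE i.isLt p))‖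
        ≤ ‖x₁ + ∑ i : Fin k, a₁ i • t i (fun p => n (Fin.castLE i.isLt p))‖
          + ‖x₂ + ∑ i : Fin k, a₂ i • t i (fun p => n (Fin.castLE i.isLt p))‖ := by
      intro n
      refine le_trans (le_of_eq ?_) (norm_add_le _ _)
      congr 1
      have hs : (∑ i : Fin k, (a₁ + a₂) i • t i (fun p => n (Fin.castLE i.isLt p)))
          = (∑ i : Fin k, a₁ i • t i (fun p => n (Fin.castLE i.isLt p)))
            + ∑ i : Fin k, a₂ i • t i (fun p => n (Fin.castLE i.isLt p)) := by
        rw [← Finset.sum_add_distrib]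
        exact Finset.sum_congr rfl fun i _ => by rw [Pi.add_apply, add_smul]
      rw [hs]; abel
    have hadd := ultraLim_add k U
      (fun n => ‖x₁ + ∑ i : Fin k, a₁ i • t i (fun p => n (Fin.castLE i.isLt p))‖)
      (fun n => ‖x₂ + ∑ i : Fin k, a₂ i • t i (fun p => n (Fin.castLE i.isLt p))‖)
      (‖x₁‖ + ∑ i, |a₁ i|) (‖x₂‖ + ∑ i, |a₂ i|)
      (normF_bound t ht x₁ a₁) (normF_bound t ht x₂ a₂)
    show ultraLim k U (fun n => ‖(x₁ + x₂)
        + ∑ i : Fin k, (a₁ + a₂) i • t i (fun p => n (Fin.castLE i.isLt p))‖)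
      ≤ treeNorm U t x₁ a₁ + treeNorm U t x₂ a₂
    rw [show treeNorm U t x₁ a₁ + treeNorm U t x₂ a₂ = _ from hadd.symm]
    refine ultraLim_mono k U _ _ ((‖x₁‖ + ∑ i, |a₁ i|) + (‖x₂‖ + ∑ i, |a₂ i|))
      (fun n => (normF_bound t ht (x₁ + x₂) (a₁ + a₂) n).trans ?_)
      (fun n => (abs_add_le _ _).trans
        (add_le_add (normF_bound t ht x₁ a₁ n) (normF_bound t ht x₂ a₂ n)))
      (iterEvForall k U _ hpt)
    have h1 : ‖x₁ + x₂‖ ≤ ‖x₁‖ + ‖x₂‖ := norm_add_le _ _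
    have h2 : ∑ i, |(a₁ + a₂) i| ≤ (∑ i, |a₁ i|) + ∑ i, |a₂ i| := by
      rw [← Finset.sum_add_distrib]
      exact Finset.sum_le_sum fun i _ => abs_add_le (a₁ i) (a₂ i)
    linarith
  have part6 : ∀ i : Fin k, treeNorm U t 0 (Pi.single i 1) = 1 := by
    intro i₀
    unfold treeNorm
    have e : (fun n : Fin k → ℕ =>
        ‖(0 : X) + ∑ i : Fin k, (Pi.single i₀ (1 : ℝ) : Fin k → ℝ) i • t i (fun p => n (Fin.castLE i.isLt p))‖)
        = fun _ => 1 := by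
      funext n
      rw [zero_add,
        Finset.sum_eq_single i₀ (fun b _ hb => by rw [Pi.single_eq_of_ne hb, zero_smul])
          (fun h => absurd (Finset.mem_univ i₀) h),
        Pi.single_eq_same, one_smul, ht]
    rw [e, ultraLim_const]
  have hpos : ∀ (x : X) (a : Fin k → ℝ), 0 ≤ treeNorm U t x a := by
    intro x a
    have h := ultraLim_mono k U (fun _ => 0) _ (‖x‖ + ∑ i, |a i|)
      (fun n => by rw [abs_zero]; positivity)
      (normF_bound t ht x a) (iterEvForall k U _ (fun n => norm_nonneg _))
    rwa [ultraLim_const] at h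
  have hxle : ∀ (x : X) (a : Fin k → ℝ), ‖x‖ ≤ treeNorm U t x a := by
    intro x a
    have h := part7 x a 0 (Nat.zero_le k)
    rw [show (fun i : Fin k => if i.1 < 0 then a i else 0) = (0 : Fin k → ℝ)
      from funext fun i => by simp] at h
    rwa [part2 x] at h
  have part1 : ∀ (x : X) (a : Fin k → ℝ), treeNorm U t 0 a ≤ 2 * treeNorm U t x a := by
    intro x a
    have h1 : treeNorm U t 0 a ≤ treeNorm U t x a + ‖x‖ := by
      have hadd := ultraLim_add k U
        (fun n => ‖x + ∑ i : Fin k, a i • t i (fun p => n (Fin.castLE i.isLt p))‖)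
        (fun _ => ‖x‖) (‖x‖ + ∑ i, |a i|) ‖x‖
        (normF_bound t ht x a) (fun n => by rw [abs_of_nonneg (norm_nonneg x)])
      rw [ultraLim_const k U ‖x‖] at hadd
      have hpt : ∀ n : Fin k → ℕ,
          ‖(0 : X) + ∑ i : Fin k, a i • t i (fun p => n (Fin.castLE i.isLt p))‖
          ≤ ‖x + ∑ i : Fin k, a i • t i (fun p => n (Fin.castLE i.isLt p))‖ + ‖x‖ := by
        intro n
        rw [zero_add]
        calc ‖∑ i : Fin k, a i • t i (fun p => n (Fin.castLE i.isLt p))‖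
            = ‖(x + ∑ i : Fin k, a i • t i (fun p => n (Fin.castLE i.isLt p))) - x‖ := by
              congr 1; abel
          _ ≤ _ := norm_sub_le _ _
      have hmono := ultraLim_mono k U _ _ ((‖x‖ + ∑ i, |a i|) + ‖x‖)
        (fun n => (normF_bound t ht 0 a n).trans (by
          rw [norm_zero, zero_add]
          have := norm_nonneg x
          linarith))
        (fun n => (abs_add_le _ _).trans (add_le_add (normF_bound t ht x a n)
          (by rw [abs_of_nonneg (norm_nonneg x)])))
        (iterEvForall k U _ hpt)
      calc treeNorm U t 0 a ≤ _ := hmono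
        _ = treeNorm U t x a + ‖x‖ := hadd
    have h2 := hxle x a
    linarith
  have part5 : ∀ (x : X) (a : Fin k → ℝ), treeNorm U t x a = 0 → x = 0 ∧ a = 0 := by
    intro x a h
    have hx : x = 0 := by
      have h1 := hxle x a
      rw [h] at h1
      exact norm_eq_zero.1 (le_antisymm h1 (norm_nonneg x))
    refine ⟨hx, ?_⟩
    have h0a : treeNorm U t 0 a = 0 := by
      have h1 := part1 x a
      rw [h] at h1
      have h2 := hpos 0 a
      linarith
    have htr : ∀ j, j ≤ k → treeNorm U t 0 (fun i : Fin k => if i.1 < j then a i else 0) = 0 := by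
      intro j hj
      have h1 := part7 0 a j hj
      rw [h0a] at h1
      exact le_antisymm h1 (hpos _ _)
    funext i₀
    show a i₀ = 0
    have hsingle : treeNorm U t 0 (Pi.single i₀ (a i₀)) = |a i₀| := by
      have hs : Pi.single i₀ (a i₀) = (a i₀ • (Pi.single i₀ (1 : ℝ) : Fin k → ℝ)) := by
        funext p
        by_cases hp : p = i₀
        · subst hp; simp
        · simp [Pi.single_eq_of_ne hp]
      have h3 := part3 (a i₀) 0 (Pi.single i₀ (1 : ℝ))
      rw [smul_zero] at h3
      rw [hs, h3, part6 i₀, mul_one]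
    have hd : Pi.single i₀ (a i₀) = (fun i : Fin k => if i.1 < i₀.1 + 1 then a i else 0)
        + ((-1 : ℝ) • fun i : Fin k => if i.1 < i₀.1 then a i else 0) := by
      funext p
      simp only [Pi.add_apply, Pi.smul_apply, smul_eq_mul, neg_one_mul]
      by_cases hp : p = i₀
      · subst hp
        rw [Pi.single_eq_same, if_pos (by omega), if_neg (by omega), neg_zero, add_zero]
      · rw [Pi.single_eq_of_ne hp]
        have hne : p.1 ≠ i₀.1 := fun hh => hp (Fin.ext hh)
        by_cases hlt : p.1 < i₀.1
        · rw [if_pos (by omega), if_pos hlt]; ring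
        · rw [if_neg (by omega), if_neg hlt, neg_zero, add_zero]
    have hle := part4 0 0 (fun i : Fin k => if i.1 < i₀.1 + 1 then a i else 0)
      ((-1 : ℝ) • fun i : Fin k => if i.1 < i₀.1 then a i else 0)
    rw [add_zero, ← hd] at hle
    have hneg := part3 (-1 : ℝ) 0 (fun i : Fin k => if i.1 < i₀.1 then a i else 0)
    rw [smul_zero, abs_neg, abs_one, one_mul] at hneg
    rw [hneg, hsingle, htr (i₀.1 + 1) i₀.isLt, htr i₀.1 i₀.isLt.le, add_zero] at hle
    exact abs_eq_zero.1 (le_antisymm hle (abs_nonneg _))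
  exact ⟨part1, part2, part3, part4, part5, part6, part7⟩
end

section
/- A metric space M is stable if and only if for all 1 ≤ l < k, bounded functions f : [ℕ]^l → M and g : [ℕ]^{k−l} → M, every free ultrafilter U, and every permutation π ∈ S_k preserving the order on {1,...,l} and on {l+1,...,k}: lim_{n₁,U}...lim_{n_k,U} d_M(f(n₁,...,n_l), g(n_{l+1},...,n_k)) = lim_{n₁,U}...lim_{n_k,U} d_M(f(n_{π(1)},...,n_{π(l)}), g(n_{π(l+1)},...,n_{π(k)})). -/
open Filter Topology
open scoped ZeroAtInfty ENNReal NNReal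

section helpers

lemma tendsto_limUnder_of_bdd {α : Type*} (U : Ultrafilter α) (h : α → ℝ) (R : ℝ)
    (bdd : ∀ a, |h a| ≤ R) : Tendsto h U (𝓝 (limUnder (U : Filter α) h)) := by
  obtain ⟨c, _, hc⟩ := (isCompact_Icc (a := -R) (b := R)).ultrafilter_le_nhds (U.map h)
    (Filter.le_principal_iff.2 (by
      rw [Ultrafilter.mem_coe, Ultrafilter.mem_map]
      exact Filter.univ_mem' (fun a => ⟨neg_le_of_abs_le (bdd a), le_of_abs_le (bdd a)⟩)))
  have ht : Tendsto h U (𝓝 c) := hc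
  rwa [ht.limUnder_eq]

lemma abs_limUnder_le {α : Type*} (U : Ultrafilter α) (h : α → ℝ) (R : ℝ)
    (bdd : ∀ a, |h a| ≤ R) : |limUnder (U : Filter α) h| ≤ R := by
  have := tendsto_limUnder_of_bdd U h R bdd
  have h1 : limUnder (U : Filter α) h ≤ R :=
    le_of_tendsto this (Filter.Eventually.of_forall fun a => (abs_le.1 (bdd a)).2)
  have h2 : -R ≤ limUnder (U : Filter α) h :=
    ge_of_tendsto this (Filter.Eventually.of_forall fun a => (abs_le.1 (bdd a)).1)
  rw [abs_le]; exact ⟨h2, h1⟩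

/-- The sum ultrafilter on `ℕ` encoding `U ⋉ V` via `Nat.pair`. -/
def pairUF (U V : Ultrafilter ℕ) : Ultrafilter ℕ :=
  U.bind (fun m => V.map (Nat.pair m))

lemma pairUF_free (U V : Ultrafilter ℕ) (hV : FreeUF V) : FreeUF (pairUF U V) := by
  intro s hs
  rw [Filter.mem_cofinite] at hs
  have : ∀ m, (Nat.pair m) ⁻¹' s ∈ V := by
    intro m
    apply hV
    rw [Filter.mem_cofinite]
    exact hs.preimage (Function.Injective.injOn (fun a b hab => (Nat.pair_eq_pair.1 hab).2))
  show s ∈ (Filter.bind (U : Filter ℕ) (fun m => ((V.map (Nat.pair m) : Ultrafilter ℕ) : Filter ℕ)))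
  rw [Filter.mem_bind]
  exact ⟨Set.univ, Filter.univ_mem, fun m _ => this m⟩

lemma limUnder_pairUF (U V : Ultrafilter ℕ) (h : ℕ → ℝ) (R : ℝ) (bdd : ∀ p, |h p| ≤ R) :
    limUnder (↑(pairUF U V) : Filter ℕ) h =
      limUnder (U : Filter ℕ) (fun m => limUnder (V : Filter ℕ) (fun n => h (Nat.pair m n))) := by
  set φ : ℕ → ℝ := fun m => limUnder (V : Filter ℕ) (fun n => h (Nat.pair m n)) with hφ
  have hφt : ∀ m, Tendsto (fun n => h (Nat.pair m n)) V (𝓝 (φ m)) :=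
    fun m => tendsto_limUnder_of_bdd V _ R (fun n => bdd _)
  have hφb : ∀ m, |φ m| ≤ R := fun m => abs_limUnder_le V _ R (fun n => bdd _)
  set L := limUnder (U : Filter ℕ) φ with hL
  have hLt : Tendsto φ U (𝓝 L) := tendsto_limUnder_of_bdd U φ R hφb
  have : Tendsto h (pairUF U V) (𝓝 L) := by
    rw [Metric.tendsto_nhds]
    intro ε hε
    have key : ∀ᶠ m in (U : Filter ℕ), ∀ᶠ n in (V : Filter ℕ), dist (h (Nat.pair m n)) L < ε := by
      have hm : ∀ᶠ m in (U : Filter ℕ), dist (φ m) L < ε / 2 :=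
        (Metric.tendsto_nhds.1 hLt) (ε/2) (by linarith)
      filter_upwards [hm] with m hm1
      have := (Metric.tendsto_nhds.1 (hφt m)) (ε/2) (by linarith)
      filter_upwards [this] with n hn
      calc dist (h (Nat.pair m n)) L ≤ dist (h (Nat.pair m n)) (φ m) + dist (φ m) L := dist_triangle _ _ _
        _ < ε/2 + ε/2 := by exact add_lt_add hn hm1
        _ = ε := by ring
    show ∀ᶠ p in (Filter.bind (U : Filter ℕ) (fun m => ((V.map (Nat.pair m) : Ultrafilter ℕ) : Filter ℕ))), dist (h p) L < ε
    rw [Filter.eventually_bind]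
    filter_upwards [key] with m hm
    exact hm
  exact this.limUnder_eq
end helpers

section kern
variable {α β : Type}

/-- A stable kernel. -/
def StableKernel {α β : Type} (D : α → β → ℝ) : Prop :=
  ∀ (U V : Ultrafilter ℕ), FreeUF U → FreeUF V →
    ∀ (a : ℕ → α) (b : ℕ → β),
      limUnder (U : Filter ℕ) (fun m => limUnder (V : Filter ℕ) (fun n => D (a m) (b n))) =
      limUnder (V : Filter ℕ) (fun n => limUnder (U : Filter ℕ) (fun m => D (a m) (b n)))

lemma StableKernel.flip {D : α → β → ℝ} (hD : StableKernel D) :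
    StableKernel (fun y x => D x y) := fun U V hU hV b a => (hD V U hV hU a b).symm

lemma StableKernel.lift {D : α → β → ℝ} {R : ℝ} (bdd : ∀ x y, |D x y| ≤ R)
    (hD : StableKernel D) (Uc : Ultrafilter ℕ) (hUc : FreeUF Uc) :
    StableKernel (fun x (y : ℕ → β) => limUnder (Uc : Filter ℕ) (fun c => D x (y c))) := by
  intro Um Un hUm hUn a Y
  set W := pairUF Un Uc with hWdef
  have hW : FreeUF W := pairUF_free _ _ hUc
  set b' : ℕ → β := fun p => Y (Nat.unpair p).1 (Nat.unpair p).2 with hb'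
  have step1 : ∀ x : α,
      limUnder (Un : Filter ℕ) (fun n => limUnder (Uc : Filter ℕ) (fun c => D x (Y n c))) =
      limUnder (W : Filter ℕ) (fun p => D x (b' p)) := by
    intro x
    rw [limUnder_pairUF Un Uc (fun p => D x (b' p)) R (fun p => bdd _ _)]
    exact congrArg _ (funext fun n => congrArg _ (funext fun c => by
      simp only [hb', Nat.unpair_pair]))
  calc limUnder (Um : Filter ℕ)
        (fun m => limUnder (Un : Filter ℕ) (fun n => limUnder (Uc : Filter ℕ) (fun c => D (a m) (Y n c))))
      = limUnder (Um : Filter ℕ) (fun m => limUnder (W : Filter ℕ) (fun p => D (a m) (b' p))) := by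
        exact congrArg _ (funext fun m => step1 (a m))
    _ = limUnder (W : Filter ℕ) (fun p => limUnder (Um : Filter ℕ) (fun m => D (a m) (b' p))) :=
        hD Um W hUm hW a b'
    _ = limUnder (Un : Filter ℕ) (fun n => limUnder (Uc : Filter ℕ) (fun c =>
          limUnder (Um : Filter ℕ) (fun m => D (a m) (Y n c)))) := by
        rw [hWdef, limUnder_pairUF Un Uc _ R (fun p => abs_limUnder_le _ _ _ (fun m => bdd _ _))]
        exact congrArg _ (funext fun n => congrArg _ (funext fun c => congrArg _ (funext fun m => by
          simp only [hb', Nat.unpair_pair])))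
    _ = limUnder (Un : Filter ℕ) (fun n => limUnder (Um : Filter ℕ) (fun m =>
          limUnder (Uc : Filter ℕ) (fun c => D (a m) (Y n c)))) := by
        exact congrArg _ (funext fun n => (hD Um Uc hUm hUc a (Y n)).symm)

lemma StableKernel.liftFst {D : α → β → ℝ} {R : ℝ} (bdd : ∀ x y, |D x y| ≤ R)
    (hD : StableKernel D) (Uc : Ultrafilter ℕ) (hUc : FreeUF Uc) :
    StableKernel (fun (x : ℕ → α) (y : β) => limUnder (Uc : Filter ℕ) (fun c => D (x c) y)) :=
  (StableKernel.lift (D := fun y x => D x y) (fun y x => bdd x y) hD.flip Uc hUc).flip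
end kern

lemma ultraLim_zero (U : Fin 0 → Ultrafilter ℕ) (F : (Fin 0 → ℕ) → ℝ) :
    ultraLim 0 U F = F (fun i => i.elim0) := rfl

lemma ultraLim_succ (k : ℕ) (U : Fin (k+1) → Ultrafilter ℕ) (F : (Fin (k+1) → ℕ) → ℝ) :
    ultraLim (k+1) U F = ultraLim k (fun i => U i.castSucc)
      (fun n => limUnder (U (Fin.last k)) (fun j => F (Fin.snoc n j))) := rfl

lemma ultraLim_add_s17 (U : Ultrafilter ℕ) : ∀ (s q : ℕ) (F : (Fin (q + s) → ℕ) → ℝ),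
    ultraLim (q + s) (fun _ => U) F =
      ultraLim q (fun _ => U) (fun p => ultraLim s (fun _ => U) (fun w => F (Fin.append p w))) := by
  intro s
  induction s with
  | zero =>
    intro q F
    exact congrArg _ (funext fun p => (congrArg F (by
      funext i
      rw [show (fun i : Fin 0 => i.elim0) = (Fin.elim0 : Fin 0 → ℕ) from funext fun i => i.elim0,
        Fin.append_elim0]
      rfl)).symm)
  | succ s ih =>
    intro q F
    calc ultraLim (q + (s+1)) (fun _ => U) F
        = ultraLim (q + s) (fun _ => U)
            (fun n => limUnder (U : Filter ℕ) (fun j => F (Fin.snoc n j))) :=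
          ultraLim_succ (q + s) (fun _ => U) F
      _ = ultraLim q (fun _ => U) (fun p => ultraLim s (fun _ => U)
            (fun w => limUnder (U : Filter ℕ) (fun j => F (Fin.snoc (Fin.append p w) j)))) :=
          ih q _
      _ = ultraLim q (fun _ => U) (fun p => ultraLim (s+1) (fun _ => U)
            (fun w => F (Fin.append p w))) := by
          refine congrArg _ (funext fun p => ?_)
          rw [ultraLim_succ s (fun _ => U) (fun w => F (Fin.append p w))]
          exact congrArg _ (funext fun w => congrArg _ (funext fun j =>
            congrArg F (Fin.append_snoc p w j).symm))

lemma ultraLim_two (U : Ultrafilter ℕ) (F : (Fin 2 → ℕ) → ℝ) :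
    ultraLim 2 (fun _ => U) F = limUnder (U : Filter ℕ) (fun a => limUnder (U : Filter ℕ)
      (fun b => F (Fin.snoc (Fin.snoc (fun i => i.elim0) a) b))) := rfl

/-- `P` does not depend on coordinate `i`. -/
def Indep {γ : Type} {t : ℕ} (P : (Fin t → ℕ) → γ) (i : Fin t) : Prop :=
  ∀ r r' : Fin t → ℕ, (∀ j, j ≠ i → r j = r' j) → P r = P r'

lemma iterSwap (U : Ultrafilter ℕ) (hU : FreeUF U) :
    ∀ (t : ℕ) {α β : Type} (D : α → β → ℝ) (R : ℝ), (∀ x y, |D x y| ≤ R) → StableKernel D →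
    ∀ (P : ℕ → (Fin t → ℕ) → α) (Q : ℕ → (Fin t → ℕ) → β),
    (∀ i : Fin t, (∀ a, Indep (P a) i) ∨ (∀ b, Indep (Q b) i)) →
    limUnder (U : Filter ℕ) (fun a => limUnder (U : Filter ℕ) (fun b =>
      ultraLim t (fun _ => U) (fun r => D (P a r) (Q b r)))) =
    limUnder (U : Filter ℕ) (fun b => limUnder (U : Filter ℕ) (fun a =>
      ultraLim t (fun _ => U) (fun r => D (P a r) (Q b r)))) := by
  intro t
  induction t with
  | zero =>
    intro α β D R bdd hD P Q _
    exact hD U U hU hU (fun a => P a (fun i => i.elim0)) (fun b => Q b (fun i => i.elim0))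
  | succ t ih =>
    intro α β D R bdd hD P Q hind
    rcases hind (Fin.last t) with hP | hQ
    · -- P independent of last coordinate: the last limit acts on Q's side
      set D' : α → (ℕ → β) → ℝ := fun x y => limUnder (U : Filter ℕ) (fun c => D x (y c)) with hD'
      have bdd' : ∀ x y, |D' x y| ≤ R := fun x y => abs_limUnder_le _ _ _ (fun c => bdd _ _)
      have hD's : StableKernel D' := StableKernel.lift bdd hD U hU
      set P' : ℕ → (Fin t → ℕ) → α := fun a r => P a (Fin.snoc r 0) with hP'
      set Q' : ℕ → (Fin t → ℕ) → (ℕ → β) := fun b r => fun c => Q b (Fin.snoc r c) with hQ'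
      have key : ∀ a b r, limUnder (U : Filter ℕ) (fun c => D (P a (Fin.snoc r c)) (Q b (Fin.snoc r c)))
          = D' (P' a r) (Q' b r) := by
        intro a b r
        refine congrArg _ (funext fun c => ?_)
        have : P a (Fin.snoc r c) = P a (Fin.snoc r 0) := by
          apply hP a
          intro j hj
          obtain ⟨j', rfl⟩ := Fin.exists_castSucc_eq.2 hj
          rw [Fin.snoc_castSucc, Fin.snoc_castSucc]
        rw [this]
      have hind' : ∀ i : Fin t, (∀ a, Indep (P' a) i) ∨ (∀ b, Indep (Q' b) i) := by
        intro i
        rcases hind i.castSucc with h | h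
        · left; intro a r r' hrr
          apply h a
          intro j hj
          rcases Fin.eq_castSucc_or_eq_last j with ⟨j', rfl⟩ | rfl
          · rw [Fin.snoc_castSucc, Fin.snoc_castSucc]
            exact hrr j' (fun hc => hj (by rw [hc]))
          · rw [Fin.snoc_last, Fin.snoc_last]
        · right; intro b r r' hrr
          funext c
          apply h b
          intro j hj
          rcases Fin.eq_castSucc_or_eq_last j with ⟨j', rfl⟩ | rfl
          · rw [Fin.snoc_castSucc, Fin.snoc_castSucc]
            exact hrr j' (fun hc => hj (by rw [hc]))
          · rw [Fin.snoc_last, Fin.snoc_last]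
      have unf : ∀ a b, ultraLim (t+1) (fun _ => U) (fun r => D (P a r) (Q b r)) =
          ultraLim t (fun _ => U) (fun r => D' (P' a r) (Q' b r)) := by
        intro a b
        rw [ultraLim_succ]
        exact congrArg _ (funext fun r => key a b r)
      calc limUnder (U : Filter ℕ) (fun a => limUnder (U : Filter ℕ) (fun b =>
              ultraLim (t+1) (fun _ => U) (fun r => D (P a r) (Q b r))))
          = limUnder (U : Filter ℕ) (fun a => limUnder (U : Filter ℕ) (fun b =>
              ultraLim t (fun _ => U) (fun r => D' (P' a r) (Q' b r)))) := by
            exact congrArg _ (funext fun a => congrArg _ (funext fun b => unf a b))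
        _ = limUnder (U : Filter ℕ) (fun b => limUnder (U : Filter ℕ) (fun a =>
              ultraLim t (fun _ => U) (fun r => D' (P' a r) (Q' b r)))) :=
            ih D' R bdd' hD's P' Q' hind'
        _ = limUnder (U : Filter ℕ) (fun b => limUnder (U : Filter ℕ) (fun a =>
              ultraLim (t+1) (fun _ => U) (fun r => D (P a r) (Q b r)))) := by
            exact congrArg _ (funext fun b => congrArg _ (funext fun a => (unf a b).symm))
    · -- Q independent of last coordinate: the last limit acts on P's side
      set D' : (ℕ → α) → β → ℝ := fun x y => limUnder (U : Filter ℕ) (fun c => D (x c) y) with hD'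
      have bdd' : ∀ x y, |D' x y| ≤ R := fun x y => abs_limUnder_le _ _ _ (fun c => bdd _ _)
      have hD's : StableKernel D' := StableKernel.liftFst bdd hD U hU
      set P' : ℕ → (Fin t → ℕ) → (ℕ → α) := fun a r => fun c => P a (Fin.snoc r c) with hP'
      set Q' : ℕ → (Fin t → ℕ) → β := fun b r => Q b (Fin.snoc r 0) with hQ'
      have key : ∀ a b r, limUnder (U : Filter ℕ) (fun c => D (P a (Fin.snoc r c)) (Q b (Fin.snoc r c)))
          = D' (P' a r) (Q' b r) := by
        intro a b r
        refine congrArg _ (funext fun c => ?_)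
        have : Q b (Fin.snoc r c) = Q b (Fin.snoc r 0) := by
          apply hQ b
          intro j hj
          obtain ⟨j', rfl⟩ := Fin.exists_castSucc_eq.2 hj
          rw [Fin.snoc_castSucc, Fin.snoc_castSucc]
        rw [this]
      have hind' : ∀ i : Fin t, (∀ a, Indep (P' a) i) ∨ (∀ b, Indep (Q' b) i) := by
        intro i
        rcases hind i.castSucc with h | h
        · left; intro a r r' hrr
          funext c
          apply h a
          intro j hj
          rcases Fin.eq_castSucc_or_eq_last j with ⟨j', rfl⟩ | rfl
          · rw [Fin.snoc_castSucc, Fin.snoc_castSucc]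
            exact hrr j' (fun hc => hj (by rw [hc]))
          · rw [Fin.snoc_last, Fin.snoc_last]
        · right; intro b r r' hrr
          apply h b
          intro j hj
          rcases Fin.eq_castSucc_or_eq_last j with ⟨j', rfl⟩ | rfl
          · rw [Fin.snoc_castSucc, Fin.snoc_castSucc]
            exact hrr j' (fun hc => hj (by rw [hc]))
          · rw [Fin.snoc_last, Fin.snoc_last]
      have unf : ∀ a b, ultraLim (t+1) (fun _ => U) (fun r => D (P a r) (Q b r)) =
          ultraLim t (fun _ => U) (fun r => D' (P' a r) (Q' b r)) := by
        intro a b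
        rw [ultraLim_succ]
        exact congrArg _ (funext fun r => key a b r)
      calc limUnder (U : Filter ℕ) (fun a => limUnder (U : Filter ℕ) (fun b =>
              ultraLim (t+1) (fun _ => U) (fun r => D (P a r) (Q b r))))
          = limUnder (U : Filter ℕ) (fun a => limUnder (U : Filter ℕ) (fun b =>
              ultraLim t (fun _ => U) (fun r => D' (P' a r) (Q' b r)))) := by
            exact congrArg _ (funext fun a => congrArg _ (funext fun b => unf a b))
        _ = limUnder (U : Filter ℕ) (fun b => limUnder (U : Filter ℕ) (fun a =>
              ultraLim t (fun _ => U) (fun r => D' (P' a r) (Q' b r)))) :=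
            ih D' R bdd' hD's P' Q' hind'
        _ = limUnder (U : Filter ℕ) (fun b => limUnder (U : Filter ℕ) (fun a =>
              ultraLim (t+1) (fun _ => U) (fun r => D (P a r) (Q b r)))) := by
            exact congrArg _ (funext fun b => congrArg _ (funext fun a => (unf a b).symm))

lemma append_eval_lt {q s : ℕ} (u : Fin q → ℕ) (v : Fin s → ℕ) (i : Fin (q + s)) (h : i.1 < q) :
    Fin.append u v i = u ⟨i.1, h⟩ := by
  rcases i with ⟨iv, hlt⟩
  simp only [Fin.append, Fin.addCases, h, dif_pos]
  rfl

lemma append_eval_ge {q s : ℕ} (u : Fin q → ℕ) (v : Fin s → ℕ) (i : Fin (q + s)) (h : q ≤ i.1) :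
    Fin.append u v i = v ⟨i.1 - q, by omega⟩ := by
  have hex : i = Fin.natAdd q ⟨i.1 - q, by omega⟩ := Fin.ext (by simp; omega)
  calc Fin.append u v i = Fin.append u v (Fin.natAdd q ⟨i.1 - q, by omega⟩) := by rw [← hex]
    _ = v ⟨i.1 - q, by omega⟩ := Fin.append_right u v _

lemma pairvec_zero (a b : ℕ) (i : Fin 2) (h : i.1 = 0) :
    (Fin.snoc (Fin.snoc (fun j : Fin 0 => (j.elim0 : ℕ)) a) b : Fin 2 → ℕ) i = a := by
  rcases i with ⟨iv, hl⟩
  have h' : iv = 0 := h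
  subst h'
  rfl

lemma pairvec_one (a b : ℕ) (i : Fin 2) (h : i.1 = 1) :
    (Fin.snoc (Fin.snoc (fun j : Fin 0 => (j.elim0 : ℕ)) a) b : Fin 2 → ℕ) i = b := by
  rcases i with ⟨iv, hl⟩
  have h' : iv = 1 := h
  subst h'
  rfl

lemma swap_core (U : Ultrafilter ℕ) (hU : FreeUF U) {α β : Type} (D : α → β → ℝ) (R : ℝ)
    (bdd : ∀ x y, |D x y| ≤ R) (hD : StableKernel D)
    (k p t : ℕ) (hk : k = p + (2 + t)) (e0 e1 : Fin k) (he0 : e0.1 = p) (he1 : e1.1 = p + 1)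
    (x : (Fin k → ℕ) → α) (y : (Fin k → ℕ) → β)
    (hx : Indep x e0) (hy : Indep y e1)
    (hsplit : ∀ q' : Fin k, p + 1 < q'.1 → Indep x q' ∨ Indep y q') :
    ultraLim k (fun _ => U) (fun n => D (x n) (y n)) =
    ultraLim k (fun _ => U) (fun n => D (x (fun i => n (Equiv.swap e0 e1 i)))
      (y (fun i => n (Equiv.swap e0 e1 i)))) := by
  subst hk
  rw [ultraLim_add_s17 U (2+t) p, ultraLim_add_s17 U (2+t) p]
  refine congrArg _ (funext fun pre => ?_)
  rw [ultraLim_add_s17 U t 2, ultraLim_add_s17 U t 2, ultraLim_two, ultraLim_two]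
  set N : ℕ → ℕ → (Fin t → ℕ) → (Fin (p + (2 + t)) → ℕ) := fun a b r =>
    Fin.append pre (Fin.append (Fin.snoc (Fin.snoc (fun j : Fin 0 => (j.elim0 : ℕ)) a) b) r)
      with hN
  have NevalLo : ∀ a b r (i : Fin (p + (2 + t))) (h : i.1 < p), N a b r i = pre ⟨i.1, h⟩ := by
    intro a b r i h
    show Fin.append pre _ i = _
    rw [append_eval_lt _ _ _ h]
  have NevalA : ∀ a b r (i : Fin (p + (2 + t))), i.1 = p → N a b r i = a := by
    intro a b r i h
    show Fin.append pre _ i = _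
    rw [append_eval_ge _ _ _ (by omega), append_eval_lt _ _ _ (by simp; omega)]
    exact pairvec_zero a b _ (by simp; omega)
  have NevalB : ∀ a b r (i : Fin (p + (2 + t))), i.1 = p + 1 → N a b r i = b := by
    intro a b r i h
    show Fin.append pre _ i = _
    rw [append_eval_ge _ _ _ (by omega), append_eval_lt _ _ _ (by simp; omega)]
    exact pairvec_one a b _ (by simp; omega)
  have NevalHi : ∀ a b r (i : Fin (p + (2 + t))) (h : p + 1 < i.1),
      N a b r i = r ⟨i.1 - (p + 2), by have := i.isLt; omega⟩ := by
    intro a b r i h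
    show Fin.append pre _ i = _
    rw [append_eval_ge _ _ _ (by omega), append_eval_ge _ _ _ (by simp; omega)]
    exact congrArg r (Fin.ext (by simp; omega))
  have hswap : ∀ a b r, (fun i => N a b r (Equiv.swap e0 e1 i)) = N b a r := by
    intro a b r
    funext i
    by_cases h0 : i = e0
    · subst h0
      rw [Equiv.swap_apply_left, NevalB a b r e1 he1, NevalA b a r _ he0]
    · by_cases h1 : i = e1
      · subst h1
        rw [Equiv.swap_apply_right, NevalA a b r e0 he0, NevalB b a r _ he1]
      · rw [Equiv.swap_apply_of_ne_of_ne h0 h1]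
        have hv0 : i.1 ≠ p := fun h => h0 (Fin.ext (by omega))
        have hv1 : i.1 ≠ p + 1 := fun h => h1 (Fin.ext (by omega))
        by_cases h2 : i.1 < p
        · rw [NevalLo a b r i h2, NevalLo b a r i h2]
        · have h3 : p + 1 < i.1 := by omega
          rw [NevalHi a b r i h3, NevalHi b a r i h3]
  set P : ℕ → (Fin t → ℕ) → α := fun b r => x (N 0 b r) with hPdef
  set Q : ℕ → (Fin t → ℕ) → β := fun a r => y (N a 0 r) with hQdef
  have agreeA : ∀ a a' b r (i : Fin (p + (2 + t))), i ≠ e0 → N a b r i = N a' b r i := by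
    intro a a' b r i hi
    have hv0 : i.1 ≠ p := fun h => hi (Fin.ext (by omega))
    by_cases h2 : i.1 < p
    · rw [NevalLo a b r i h2, NevalLo a' b r i h2]
    · by_cases h3 : i.1 = p + 1
      · rw [NevalB a b r i h3, NevalB a' b r i h3]
      · have h4 : p + 1 < i.1 := by omega
        rw [NevalHi a b r i h4, NevalHi a' b r i h4]
  have agreeB : ∀ a b b' r (i : Fin (p + (2 + t))), i ≠ e1 → N a b r i = N a b' r i := by
    intro a b b' r i hi
    have hv1 : i.1 ≠ p + 1 := fun h => hi (Fin.ext (by omega))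
    by_cases h2 : i.1 < p
    · rw [NevalLo a b r i h2, NevalLo a b' r i h2]
    · by_cases h3 : i.1 = p
      · rw [NevalA a b r i h3, NevalA a b' r i h3]
      · have h4 : p + 1 < i.1 := by omega
        rw [NevalHi a b r i h4, NevalHi a b' r i h4]
  have hxP : ∀ a b r, x (N a b r) = P b r := fun a b r => hx _ _ (agreeA a 0 b r)
  have hyQ : ∀ a b r, y (N a b r) = Q a r := fun a b r => hy _ _ (agreeB a b 0 r)
  have hind : ∀ i : Fin t, (∀ a, Indep (P a) i) ∨ (∀ b, Indep (Q b) i) := by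
    intro i
    have hgi : p + 2 + i.1 < p + (2 + t) := by have := i.isLt; omega
    have agree : ∀ a b (r r' : Fin t → ℕ), (∀ j, j ≠ i → r j = r' j) →
        ∀ i' : Fin (p + (2 + t)), i' ≠ ⟨p + 2 + i.1, hgi⟩ → N a b r i' = N a b r' i' := by
      intro a b r r' hrr i' hi'
      by_cases h2 : i'.1 < p
      · rw [NevalLo a b r i' h2, NevalLo a b r' i' h2]
      · by_cases h3 : i'.1 = p
        · rw [NevalA a b r i' h3, NevalA a b r' i' h3]
        · by_cases h4 : i'.1 = p + 1
          · rw [NevalB a b r i' h4, NevalB a b r' i' h4]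
          · have h5 : p + 1 < i'.1 := by omega
            rw [NevalHi a b r i' h5, NevalHi a b r' i' h5]
            apply hrr
            intro hc
            apply hi'
            apply Fin.ext
            have hcc := congrArg Fin.val hc
            simp only [] at hcc
            show i'.1 = p + 2 + i.1
            have := i'.isLt
            omega
    rcases hsplit ⟨p + 2 + i.1, hgi⟩ (by show p + 1 < p + 2 + i.1; omega) with h | h
    · left
      intro a r r' hrr
      exact h _ _ (agree 0 a r r' hrr)
    · right
      intro b r r' hrr
      exact h _ _ (agree b 0 r r' hrr)
  calc limUnder (U : Filter ℕ) (fun a => limUnder (U : Filter ℕ) (fun b =>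
          ultraLim t (fun _ => U) (fun r => D (x (N a b r)) (y (N a b r)))))
      = limUnder (U : Filter ℕ) (fun a => limUnder (U : Filter ℕ) (fun b =>
          ultraLim t (fun _ => U) (fun r => D (P b r) (Q a r)))) := by
        exact congrArg _ (funext fun a => congrArg _ (funext fun b =>
          congrArg _ (funext fun r => by rw [hxP, hyQ])))
    _ = limUnder (U : Filter ℕ) (fun a => limUnder (U : Filter ℕ) (fun b =>
          ultraLim t (fun _ => U) (fun r => D (P a r) (Q b r)))) :=
        (iterSwap U hU t D R bdd hD P Q hind).symm
    _ = limUnder (U : Filter ℕ) (fun a => limUnder (U : Filter ℕ) (fun b =>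
          ultraLim t (fun _ => U) (fun r =>
            D (x (fun i => N a b r (Equiv.swap e0 e1 i)))
              (y (fun i => N a b r (Equiv.swap e0 e1 i)))))) := by
        refine congrArg _ (funext fun a => congrArg _ (funext fun b =>
          congrArg _ (funext fun r => ?_)))
        rw [hswap, hxP, hyQ]

section enum
variable {k : ℕ}

lemma enum_swap_lo {l : ℕ} (S : Finset (Fin k)) (hS : S.card = l) (a b : Fin k)
    (hab : a.1 + 1 = b.1) (ha : a ∉ S) (hb : b ∈ S)
    (hS' : (insert a (S.erase b)).card = l) (i : Fin l) :
    (insert a (S.erase b)).orderEmbOfFin hS' i = Equiv.swap a b (S.orderEmbOfFin hS i) := by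
  have hmem : ∀ x, Equiv.swap a b (S.orderEmbOfFin hS x) ∈ insert a (S.erase b) := by
    intro x
    have hx : S.orderEmbOfFin hS x ∈ S := Finset.orderEmbOfFin_mem S hS x
    by_cases h : S.orderEmbOfFin hS x = b
    · rw [h, Equiv.swap_apply_right]; exact Finset.mem_insert_self _ _
    · have hna : S.orderEmbOfFin hS x ≠ a := fun hc => ha (hc ▸ hx)
      rw [Equiv.swap_apply_of_ne_of_ne hna h]
      exact Finset.mem_insert_of_mem (Finset.mem_erase.2 ⟨h, hx⟩)
  have hmono : StrictMono (fun x => Equiv.swap a b (S.orderEmbOfFin hS x)) := by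
    intro x y hxy
    have h1 : S.orderEmbOfFin hS x < S.orderEmbOfFin hS y :=
      (S.orderEmbOfFin hS).strictMono hxy
    set u := S.orderEmbOfFin hS x
    set v := S.orderEmbOfFin hS y
    have hu : u ∈ S := Finset.orderEmbOfFin_mem S hS x
    have hv : v ∈ S := Finset.orderEmbOfFin_mem S hS y
    have hua : u ≠ a := fun hc => ha (hc ▸ hu)
    have hva : v ≠ a := fun hc => ha (hc ▸ hv)
    show Equiv.swap a b u < Equiv.swap a b v
    by_cases hub : u = b
    · subst hub
      rw [Equiv.swap_apply_right]
      have hvb : u ≠ v := ne_of_lt h1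
      rw [Equiv.swap_apply_of_ne_of_ne hva (ne_of_gt h1)]
      have : a < u := by rw [Fin.lt_def]; omega
      exact lt_trans this h1
    · rw [Equiv.swap_apply_of_ne_of_ne hua hub]
      by_cases hvb : v = b
      · subst hvb
        rw [Equiv.swap_apply_right]
        rw [Fin.lt_def] at h1 ⊢
        have : u.1 ≠ a.1 := fun hc => hua (Fin.ext hc)
        omega
      · rw [Equiv.swap_apply_of_ne_of_ne hva hvb]; exact h1
  exact (congrFun (Finset.orderEmbOfFin_unique hS' hmem hmono) i).symm

lemma enum_swap_hi {l : ℕ} (T : Finset (Fin k)) (hT : T.card = l) (a b : Fin k)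
    (hab : a.1 + 1 = b.1) (ha : a ∈ T) (hb : b ∉ T)
    (hT' : (insert b (T.erase a)).card = l) (i : Fin l) :
    (insert b (T.erase a)).orderEmbOfFin hT' i = Equiv.swap a b (T.orderEmbOfFin hT i) := by
  have hmem : ∀ x, Equiv.swap a b (T.orderEmbOfFin hT x) ∈ insert b (T.erase a) := by
    intro x
    have hx : T.orderEmbOfFin hT x ∈ T := Finset.orderEmbOfFin_mem T hT x
    by_cases h : T.orderEmbOfFin hT x = a
    · rw [h, Equiv.swap_apply_left]; exact Finset.mem_insert_self _ _
    · have hnb : T.orderEmbOfFin hT x ≠ b := fun hc => hb (hc ▸ hx)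
      rw [Equiv.swap_apply_of_ne_of_ne h hnb]
      exact Finset.mem_insert_of_mem (Finset.mem_erase.2 ⟨h, hx⟩)
  have hmono : StrictMono (fun x => Equiv.swap a b (T.orderEmbOfFin hT x)) := by
    intro x y hxy
    have h1 : T.orderEmbOfFin hT x < T.orderEmbOfFin hT y :=
      (T.orderEmbOfFin hT).strictMono hxy
    set u := T.orderEmbOfFin hT x
    set v := T.orderEmbOfFin hT y
    have hu : u ∈ T := Finset.orderEmbOfFin_mem T hT x
    have hv : v ∈ T := Finset.orderEmbOfFin_mem T hT y
    have hub : u ≠ b := fun hc => hb (hc ▸ hu)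
    have hvb : v ≠ b := fun hc => hb (hc ▸ hv)
    show Equiv.swap a b u < Equiv.swap a b v
    by_cases hua : u = a
    · subst hua
      rw [Equiv.swap_apply_left]
      rw [Equiv.swap_apply_of_ne_of_ne (ne_of_gt h1) hvb]
      rw [Fin.lt_def] at h1 ⊢
      have : v.1 ≠ b.1 := fun hc => hvb (Fin.ext hc)
      omega
    · rw [Equiv.swap_apply_of_ne_of_ne hua hub]
      by_cases hva : v = a
      · rw [hva, Equiv.swap_apply_left]
        rw [hva, Fin.lt_def] at h1
        rw [Fin.lt_def]
        omega
      · rw [Equiv.swap_apply_of_ne_of_ne hva hvb]; exact h1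
  exact (congrFun (Finset.orderEmbOfFin_unique hT' hmem hmono) i).symm
end enum

lemma orderEmbOfFin_congr {γ : Type*} [LinearOrder γ] {s t : Finset γ} (h : s = t) {j : ℕ}
    (hs : s.card = j) (ht : t.card = j) (i : Fin j) :
    s.orderEmbOfFin hs i = t.orderEmbOfFin ht i := by subst h; rfl

section fwd
variable {M : Type*} [MetricSpace M]

lemma stableKernel_dist (hM : StableSpace M) {l m : ℕ}
    (f : (Fin l → ℕ) → M) (g : (Fin m → ℕ) → M) (hf : IsBddMap f) (hg : IsBddMap g) :
    StableKernel (fun u v => dist (f u) (g v)) := by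
  intro U V hU hV a b
  obtain ⟨Rf, hRf⟩ := hf
  obtain ⟨Rg, hRg⟩ := hg
  exact hM U V hU hV (fun p => f (a p)) (fun q => g (b q))
    (Metric.isBounded_iff.2 ⟨Rf, by rintro _ ⟨p, rfl⟩ _ ⟨q, rfl⟩; exact hRf _ _⟩)
    (Metric.isBounded_iff.2 ⟨Rg, by rintro _ ⟨p, rfl⟩ _ ⟨q, rfl⟩; exact hRg _ _⟩)

lemma bdd_dist_kernel {l m : ℕ}
    (f : (Fin l → ℕ) → M) (g : (Fin m → ℕ) → M) (hf : IsBddMap f) (hg : IsBddMap g) :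
    ∃ R : ℝ, ∀ u v, |dist (f u) (g v)| ≤ R := by
  obtain ⟨Rf, hRf⟩ := hf
  obtain ⟨Rg, hRg⟩ := hg
  refine ⟨Rf + dist (f (fun _ => 0)) (g (fun _ => 0)) + Rg, fun u v => ?_⟩
  rw [abs_of_nonneg dist_nonneg]
  calc dist (f u) (g v) ≤ dist (f u) (f (fun _ => 0)) + dist (f (fun _ => 0)) (g (fun _ => 0))
        + dist (g (fun _ => 0)) (g v) := dist_triangle4 _ _ _ _
    _ ≤ Rf + dist (f (fun _ => 0)) (g (fun _ => 0)) + Rg := by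
        have h1 := hRf u (fun _ => 0)
        have h2 := hRg (fun _ => 0) v
        linarith

lemma key_induction (hM : StableSpace M) (l m : ℕ)
    (f : (Fin l → ℕ) → M) (g : (Fin m → ℕ) → M) (hf : IsBddMap f) (hg : IsBddMap g)
    (U : Ultrafilter ℕ) (hU : FreeUF U)
    (S₀ : Finset (Fin (l + m))) (hS₀ : S₀.card = l) (hS₀init : ∀ i ∈ S₀, i.1 < l) :
    ∀ (w : ℕ) (S : Finset (Fin (l + m))) (hS : S.card = l), (∑ i ∈ S, i.1) = w →
    ultraLim (l + m) (fun _ => U)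
      (fun n => dist (f (subTuple n S hS)) (g (subTuple n Sᶜ (compl_card S hS)))) =
    ultraLim (l + m) (fun _ => U)
      (fun n => dist (f (subTuple n S₀ hS₀)) (g (subTuple n S₀ᶜ (compl_card S₀ hS₀)))) := by
  obtain ⟨R, hR⟩ := bdd_dist_kernel f g hf hg
  have hKer : StableKernel (fun u v => dist (f u) (g v)) := stableKernel_dist hM f g hf hg
  intro w
  induction w using Nat.strong_induction_on with
  | _ w IH =>
    intro S hS hw
    by_cases hinit : ∀ i ∈ S, i.1 < l
    · -- S is the initial segment, hence S = S₀
      have hsub : S ⊆ S₀ := by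
        intro i hi
        -- both are subsets of the first l elements with card l, so both equal the set of
        -- elements with value < l
        have hS₀eq : S₀ = Finset.filter (fun i : Fin (l+m) => i.1 < l) Finset.univ := by
          apply Finset.eq_of_subset_of_card_le
          · intro z hz
            simp only [Finset.mem_filter, Finset.mem_univ, true_and]
            exact hS₀init z hz
          · rw [hS₀]
            have : (Finset.filter (fun i : Fin (l+m) => i.1 < l) Finset.univ).card ≤ l := by
              have : (Finset.filter (fun i : Fin (l+m) => i.1 < l) Finset.univ).card =
                  (Finset.filter (fun i : Fin (l+m) => i.1 < l) Finset.univ).card := rfl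
              -- count: the filter has exactly min l (l+m) = l elements
              classical
              have hinj : ∀ z ∈ Finset.filter (fun i : Fin (l+m) => i.1 < l) Finset.univ,
                  (fun i : Fin (l+m) => i.1) z ∈ Finset.range l := by
                intro z hz
                simp only [Finset.mem_filter] at hz
                exact Finset.mem_range.2 hz.2
              calc (Finset.filter (fun i : Fin (l+m) => i.1 < l) Finset.univ).card
                  ≤ (Finset.range l).card := Finset.card_le_card_of_injOn (fun i => i.1) hinj
                    (fun z _ z' _ h => Fin.ext h)
                _ = l := Finset.card_range l
            exact this
        rw [hS₀eq]
        simp only [Finset.mem_filter, Finset.mem_univ, true_and]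
        exact hinit i hi
      have hSS : S = S₀ := Finset.eq_of_subset_of_card_le hsub (by rw [hS, hS₀])
      subst hSS
      rfl
    · push_neg at hinit
      obtain ⟨i0, hi0S, hi0l⟩ := hinit
      -- find an adjacent pair j ∉ S, j+1 ∈ S
      have hex : ∃ (j : ℕ) (hj : j + 1 < l + m),
          (⟨j + 1, hj⟩ : Fin (l+m)) ∈ S ∧ (⟨j, Nat.lt_of_succ_lt hj⟩ : Fin (l+m)) ∉ S := by
        by_contra hc
        push_neg at hc
        have down : ∀ (d p : ℕ) (hplt : p < l + m), p + d = i0.1 →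
            (⟨p, hplt⟩ : Fin (l+m)) ∈ S := by
          intro d
          induction d with
          | zero =>
            intro p hplt hp
            have : (⟨p, hplt⟩ : Fin (l+m)) = i0 := Fin.ext (by simp; omega)
            rw [this]; exact hi0S
          | succ d ihd =>
            intro p hplt hp
            have hp1 : p + 1 < l + m := by have := i0.isLt; omega
            have := ihd (p+1) hp1 (by omega)
            exact hc p hp1 this
        have hcard : i0.1 + 1 ≤ S.card := by
          have hmaps : ∀ p ∈ Finset.range (i0.1 + 1),
              (fun p : ℕ => if h : p < l + m then (⟨p, h⟩ : Fin (l+m)) else i0) p ∈ S := by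
            intro p hp
            rw [Finset.mem_range] at hp
            have hplt : p < l + m := by have := i0.isLt; omega
            simp only [dif_pos hplt]
            exact down (i0.1 - p) p hplt (by omega)
          have hinj : Set.InjOn (fun p : ℕ => if h : p < l + m then (⟨p, h⟩ : Fin (l+m)) else i0)
              (Finset.range (i0.1 + 1)) := by
            intro p hp q hq hpq
            rw [Finset.coe_range, Set.mem_Iio] at hp hq
            have hplt : p < l + m := by have := i0.isLt; omega
            have hqlt : q < l + m := by have := i0.isLt; omega
            simp only [dif_pos hplt, dif_pos hqlt] at hpq
            exact congrArg Fin.val hpq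
          calc i0.1 + 1 = (Finset.range (i0.1 + 1)).card := (Finset.card_range _).symm
            _ ≤ S.card := Finset.card_le_card_of_injOn _ hmaps hinj
        rw [hS] at hcard
        omega
      obtain ⟨j, hj, hbS, haS⟩ := hex
      set a : Fin (l+m) := ⟨j, Nat.lt_of_succ_lt hj⟩ with hadef
      set b : Fin (l+m) := ⟨j + 1, hj⟩ with hbdef
      have hab : a.1 + 1 = b.1 := rfl
      set S' : Finset (Fin (l+m)) := insert a (S.erase b) with hS'def
      have hanotin : a ∉ S.erase b := fun h => haS (Finset.mem_of_mem_erase h)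
      have hlpos : 0 < l := by
        have := Finset.card_pos.2 ⟨b, hbS⟩
        omega
      have hS' : S'.card = l := by
        rw [hS'def, Finset.card_insert_of_notMem hanotin, Finset.card_erase_of_mem hbS, hS]
        omega
      have hw' : (∑ i ∈ S', i.1) + 1 = w := by
        rw [hS'def, Finset.sum_insert hanotin]
        have h1 : (∑ i ∈ S.erase b, i.1) + b.1 = ∑ i ∈ S, i.1 := Finset.sum_erase_add S _ hbS
        omega
      have hcompl : S'ᶜ = insert b (Sᶜ.erase a) := by
        ext z
        simp only [hS'def, Finset.mem_compl, Finset.mem_insert, Finset.mem_erase]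
        have hne : a ≠ b := by
          intro h
          have := congrArg Fin.val h
          simp [hadef, hbdef] at this
        constructor
        · intro h
          push_neg at h
          by_cases hzb : z = b
          · left; exact hzb
          · right
            exact ⟨h.1, fun hzS => (h.2 hzb) hzS⟩
        · intro h
          push_neg
          rcases h with rfl | ⟨hza, hzS⟩
          · exact ⟨fun h => hne h.symm, fun h' => absurd rfl h'⟩
          · exact ⟨hza, fun _ => hzS⟩
      -- the swap step
      have hstep : ultraLim (l + m) (fun _ => U)
          (fun n => dist (f (subTuple n S hS)) (g (subTuple n Sᶜ (compl_card S hS)))) =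
          ultraLim (l + m) (fun _ => U)
          (fun n => dist (f (subTuple n S' hS')) (g (subTuple n S'ᶜ (compl_card S' hS')))) := by
        have hmain := swap_core U hU (fun u v => dist (f u) (g v)) R hR hKer
          (l + m) j (l + m - j - 2) (by omega) a b rfl rfl
          (fun n => subTuple n S hS) (fun n => subTuple n Sᶜ (compl_card S hS))
          (by -- Indep x a
            intro n n' hnn
            funext i
            exact hnn _ (fun hc => haS (hc ▸ Finset.orderEmbOfFin_mem S hS i)))
          (by -- Indep y b
            intro n n' hnn
            funext i
            refine hnn _ (fun hc => ?_)
            have := Finset.orderEmbOfFin_mem Sᶜ (compl_card S hS) i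
            rw [hc, Finset.mem_compl] at this
            exact this hbS)
          (by -- split
            intro q' _
            by_cases hq : q' ∈ S
            · right
              intro n n' hnn
              funext i
              refine hnn _ (fun hc => ?_)
              have := Finset.orderEmbOfFin_mem Sᶜ (compl_card S hS) i
              rw [hc, Finset.mem_compl] at this
              exact this hq
            · left
              intro n n' hnn
              funext i
              exact hnn _ (fun hc => hq (hc ▸ Finset.orderEmbOfFin_mem S hS i)))
        rw [hmain]
        refine congrArg _ (funext fun n => ?_)
        have hxeq : subTuple (fun i => n (Equiv.swap a b i)) S hS = subTuple n S' hS' := by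
          funext i
          show n (Equiv.swap a b (S.orderEmbOfFin hS i)) = n (S'.orderEmbOfFin hS' i)
          rw [enum_swap_lo S hS a b hab haS hbS hS' i]
        have hyeq : subTuple (fun i => n (Equiv.swap a b i)) Sᶜ (compl_card S hS) =
            subTuple n S'ᶜ (compl_card S' hS') := by
          funext i
          show n (Equiv.swap a b (Sᶜ.orderEmbOfFin (compl_card S hS) i)) =
            n (S'ᶜ.orderEmbOfFin (compl_card S' hS') i)
          have h2 : (insert b (Sᶜ.erase a)).card = m := by
            rw [← hcompl]; exact compl_card S' hS'
          rw [orderEmbOfFin_congr hcompl (compl_card S' hS') h2 i]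
          rw [enum_swap_hi Sᶜ (compl_card S hS) a b hab (Finset.mem_compl.2 haS)
            (fun hc => (Finset.mem_compl.1 hc) hbS) h2 i]
        rw [← hxeq, ← hyeq]
      rw [hstep]
      exact IH (∑ i ∈ S', i.1) (by omega) S' hS' rfl
end fwd

lemma limUnder_const' {γ : Type*} (F : Filter γ) [F.NeBot] (c : ℝ) :
    limUnder F (fun _ => c) = c :=
  Filter.Tendsto.limUnder_eq tendsto_const_nhds

section main
variable {M : Type*} [MetricSpace M]

theorem forward_dir (hM : StableSpace M) (l m : ℕ) (hl : 0 < l) (hm : 0 < m)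
    (f : (Fin l → ℕ) → M) (g : (Fin m → ℕ) → M) (hf : IsBddMap f) (hg : IsBddMap g)
    (U : Ultrafilter ℕ) (hU : FreeUF U) (π : Equiv.Perm (Fin (l + m)))
    (hπ : OrderPreservingPerm π) :
    ultraLim (l + m) (fun _ => U)
        (fun n => dist (f (fun i => n (Fin.castAdd m i)))
          (g (fun j => n (Fin.natAdd l j)))) =
      ultraLim (l + m) (fun _ => U)
        (fun n => dist (f (fun i => n (π (Fin.castAdd m i))))
          (g (fun j => n (π (Fin.natAdd l j))))) := by
  classical
  set S₀ : Finset (Fin (l + m)) := Finset.image (Fin.castAdd m) Finset.univ with hS₀def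
  have hS₀ : S₀.card = l := by
    rw [hS₀def, Finset.card_image_of_injective _ (Fin.strictMono_castAdd m).injective,
      Finset.card_univ, Fintype.card_fin]
  have hS₀init : ∀ i ∈ S₀, i.1 < l := by
    intro i hi
    rw [hS₀def, Finset.mem_image] at hi
    obtain ⟨i', _, rfl⟩ := hi
    exact i'.isLt
  have henum0 : ∀ i : Fin l, S₀.orderEmbOfFin hS₀ i = Fin.castAdd m i := fun i =>
    (congrFun (Finset.orderEmbOfFin_unique hS₀
      (fun x => Finset.mem_image_of_mem _ (Finset.mem_univ x))
      (Fin.strictMono_castAdd m)) i).symm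
  have henum0c : ∀ j : Fin m, S₀ᶜ.orderEmbOfFin (compl_card S₀ hS₀) j = Fin.natAdd l j := by
    intro j
    refine (congrFun (Finset.orderEmbOfFin_unique (compl_card S₀ hS₀) ?_
      (Fin.strictMono_natAdd l)) j).symm
    intro x
    rw [Finset.mem_compl, hS₀def, Finset.mem_image]
    rintro ⟨i', -, hc⟩
    have := congrArg Fin.val hc
    simp only [Fin.coe_castAdd, Fin.coe_natAdd] at this
    have := i'.isLt
    omega
  set S₁ : Finset (Fin (l + m)) := Finset.image (fun i => π (Fin.castAdd m i)) Finset.univ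
    with hS₁def
  have hS₁ : S₁.card = l := by
    rw [hS₁def, Finset.card_image_of_injective _
      (fun p q (h : π (Fin.castAdd m p) = π (Fin.castAdd m q)) =>
        (Fin.strictMono_castAdd m).injective (π.injective h)),
      Finset.card_univ, Fintype.card_fin]
  have henum1 : ∀ i : Fin l, S₁.orderEmbOfFin hS₁ i = π (Fin.castAdd m i) := fun i =>
    (congrFun (Finset.orderEmbOfFin_unique hS₁
      (fun x => Finset.mem_image_of_mem _ (Finset.mem_univ x)) hπ.1) i).symm
  have henum1c : ∀ j : Fin m, S₁ᶜ.orderEmbOfFin (compl_card S₁ hS₁) j = π (Fin.natAdd l j) := by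
    intro j
    refine (congrFun (Finset.orderEmbOfFin_unique (compl_card S₁ hS₁) ?_ hπ.2) j).symm
    intro x
    rw [Finset.mem_compl, hS₁def, Finset.mem_image]
    rintro ⟨i', -, hc⟩
    have hc' := π.injective hc
    have := congrArg Fin.val hc'
    simp only [Fin.coe_castAdd, Fin.coe_natAdd] at this
    have := i'.isLt
    omega
  have hkey := key_induction hM l m f g hf hg U hU S₀ hS₀ hS₀init (∑ i ∈ S₁, i.1) S₁ hS₁ rfl
  calc ultraLim (l + m) (fun _ => U)
        (fun n => dist (f (fun i => n (Fin.castAdd m i))) (g (fun j => n (Fin.natAdd l j))))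
      = ultraLim (l + m) (fun _ => U)
        (fun n => dist (f (subTuple n S₀ hS₀)) (g (subTuple n S₀ᶜ (compl_card S₀ hS₀)))) := by
        refine congrArg _ (funext fun n => ?_)
        rw [show subTuple n S₀ hS₀ = (fun i => n (Fin.castAdd m i)) from
            funext fun i => congrArg n (henum0 i),
          show subTuple n S₀ᶜ (compl_card S₀ hS₀) = (fun j => n (Fin.natAdd l j)) from
            funext fun j => congrArg n (henum0c j)]
    _ = ultraLim (l + m) (fun _ => U)
        (fun n => dist (f (subTuple n S₁ hS₁)) (g (subTuple n S₁ᶜ (compl_card S₁ hS₁)))) :=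
        hkey.symm
    _ = ultraLim (l + m) (fun _ => U)
        (fun n => dist (f (fun i => n (π (Fin.castAdd m i))))
          (g (fun j => n (π (Fin.natAdd l j))))) := by
        refine congrArg _ (funext fun n => ?_)
        rw [show subTuple n S₁ hS₁ = (fun i => n (π (Fin.castAdd m i))) from
            funext fun i => congrArg n (henum1 i),
          show subTuple n S₁ᶜ (compl_card S₁ hS₁) = (fun j => n (π (Fin.natAdd l j))) from
            funext fun j => congrArg n (henum1c j)]
end main

section back
variable {M : Type*} [MetricSpace M]

theorem backward_dir
    (H : ∀ l m : ℕ, 0 < l → 0 < m →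
        ∀ (f : (Fin l → ℕ) → M) (g : (Fin m → ℕ) → M), IsBddMap f → IsBddMap g →
          ∀ U : Ultrafilter ℕ, FreeUF U →
            ∀ π : Equiv.Perm (Fin (l + m)), OrderPreservingPerm π →
              ultraLim (l + m) (fun _ => U)
                  (fun n => dist (f (fun i => n (Fin.castAdd m i)))
                    (g (fun j => n (Fin.natAdd l j)))) =
                ultraLim (l + m) (fun _ => U)
                  (fun n => dist (f (fun i => n (π (Fin.castAdd m i))))
                    (g (fun j => n (π (Fin.natAdd l j)))))) :
    StableSpace M := by
  intro U V hU hV x y hx hy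
  obtain ⟨Cx, hCx⟩ := Metric.isBounded_iff.1 hx
  obtain ⟨Cy, hCy⟩ := Metric.isBounded_iff.1 hy
  set R : ℝ := Cx + dist (x 0) (y 0) + Cy with hRdef
  have hR : ∀ p q, |dist (x p) (y q)| ≤ R := by
    intro p q
    rw [abs_of_nonneg dist_nonneg]
    calc dist (x p) (y q) ≤ dist (x p) (x 0) + dist (x 0) (y 0) + dist (y 0) (y q) :=
        dist_triangle4 _ _ _ _
      _ ≤ Cx + dist (x 0) (y 0) + Cy := by
          have h1 := hCx (Set.mem_range_self p) (Set.mem_range_self 0)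
          have h2 := hCy (Set.mem_range_self 0) (Set.mem_range_self q)
          linarith
  set x' : ℕ → M := fun p => x (Nat.unpair p).1 with hx'def
  set y' : ℕ → M := fun p => y (Nat.unpair p).2 with hy'def
  set f : (Fin 1 → ℕ) → M := fun v => x' (v 0) with hfdef
  set g : (Fin 1 → ℕ) → M := fun v => y' (v 0) with hgdef
  have hf : IsBddMap f := by
    refine ⟨Cx, fun u v => hCx (Set.mem_range_self _) (Set.mem_range_self _)⟩
  have hg : IsBddMap g := by
    refine ⟨Cy, fun u v => hCy (Set.mem_range_self _) (Set.mem_range_self _)⟩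
  set W : Ultrafilter ℕ := pairUF U V with hWdef
  have hW : FreeUF W := pairUF_free U V hV
  set o0 : Fin (1 + 1) := ⟨0, by omega⟩ with ho0
  set o1 : Fin (1 + 1) := ⟨1, by omega⟩ with ho1
  set π : Equiv.Perm (Fin (1 + 1)) := Equiv.swap o0 o1 with hπdef
  have hπ : OrderPreservingPerm π :=
    ⟨fun i j h => absurd (Subsingleton.elim i j) (ne_of_lt h),
     fun i j h => absurd (Subsingleton.elim i j) (ne_of_lt h)⟩
  have hyp := H 1 1 one_pos one_pos f g hf hg W hW π hπ
  -- evaluate the two ultraLims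
  have hca : ∀ (a b : ℕ), (Fin.snoc (Fin.snoc (fun j : Fin 0 => (j.elim0 : ℕ)) a) b : Fin (1+1) → ℕ)
      (Fin.castAdd 1 (0 : Fin 1)) = a := fun a b => pairvec_zero a b _ rfl
  have hna : ∀ (a b : ℕ), (Fin.snoc (Fin.snoc (fun j : Fin 0 => (j.elim0 : ℕ)) a) b : Fin (1+1) → ℕ)
      (Fin.natAdd 1 (0 : Fin 1)) = b := fun a b => pairvec_one a b _ rfl
  have hswap0 : π (Fin.castAdd 1 (0 : Fin 1)) = o1 := by
    rw [hπdef, show Fin.castAdd 1 (0 : Fin 1) = o0 from rfl, Equiv.swap_apply_left]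
  have hswap1 : π (Fin.natAdd 1 (0 : Fin 1)) = o0 := by
    rw [hπdef, show Fin.natAdd 1 (0 : Fin 1) = o1 from rfl, Equiv.swap_apply_right]
  have hE : limUnder (W : Filter ℕ) (fun a => limUnder (W : Filter ℕ)
        (fun b => dist (x' a) (y' b))) =
      limUnder (W : Filter ℕ) (fun a => limUnder (W : Filter ℕ)
        (fun b => dist (x' b) (y' a))) := by
    have e1 : ultraLim (1 + 1) (fun _ => W)
        (fun n => dist (f (fun i => n (Fin.castAdd 1 i))) (g (fun j => n (Fin.natAdd 1 j)))) =
        limUnder (W : Filter ℕ) (fun a => limUnder (W : Filter ℕ)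
          (fun b => dist (x' a) (y' b))) := by
      refine (ultraLim_two W _).trans ?_
      refine congrArg _ (funext fun a => congrArg _ (funext fun b => ?_))
      show dist (x' ((Fin.snoc (Fin.snoc (fun j : Fin 0 => (j.elim0 : ℕ)) a) b : Fin (1+1) → ℕ)
          (Fin.castAdd 1 (0 : Fin 1))))
        (y' ((Fin.snoc (Fin.snoc (fun j : Fin 0 => (j.elim0 : ℕ)) a) b : Fin (1+1) → ℕ)
          (Fin.natAdd 1 (0 : Fin 1)))) = dist (x' a) (y' b)
      rw [hca a b, hna a b]
    have e2 : ultraLim (1 + 1) (fun _ => W)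
        (fun n => dist (f (fun i => n (π (Fin.castAdd 1 i))))
          (g (fun j => n (π (Fin.natAdd 1 j))))) =
        limUnder (W : Filter ℕ) (fun a => limUnder (W : Filter ℕ)
          (fun b => dist (x' b) (y' a))) := by
      refine (ultraLim_two W _).trans ?_
      refine congrArg _ (funext fun a => congrArg _ (funext fun b => ?_))
      show dist (x' ((Fin.snoc (Fin.snoc (fun j : Fin 0 => (j.elim0 : ℕ)) a) b : Fin (1+1) → ℕ)
          (π (Fin.castAdd 1 (0 : Fin 1)))))
        (y' ((Fin.snoc (Fin.snoc (fun j : Fin 0 => (j.elim0 : ℕ)) a) b : Fin (1+1) → ℕ)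
          (π (Fin.natAdd 1 (0 : Fin 1))))) = dist (x' b) (y' a)
      rw [hswap0, hswap1]
      rw [show (Fin.snoc (Fin.snoc (fun j : Fin 0 => (j.elim0 : ℕ)) a) b : Fin (1+1) → ℕ) o1 = b
          from pairvec_one a b _ rfl,
        show (Fin.snoc (Fin.snoc (fun j : Fin 0 => (j.elim0 : ℕ)) a) b : Fin (1+1) → ℕ) o0 = a
          from pairvec_zero a b _ rfl]
    exact e1.symm.trans (hyp.trans e2)
  -- compute both sides of hE
  have hC1 : limUnder (W : Filter ℕ) (fun a => limUnder (W : Filter ℕ)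
        (fun b => dist (x' a) (y' b))) =
      limUnder (U : Filter ℕ) (fun a => limUnder (V : Filter ℕ) (fun b => dist (x a) (y b))) := by
    have inner : ∀ a, limUnder (W : Filter ℕ) (fun b => dist (x' a) (y' b)) =
        limUnder (V : Filter ℕ) (fun v => dist (x' a) (y v)) := by
      intro a
      rw [hWdef, limUnder_pairUF U V _ R (fun p => hR _ _)]
      have hconst : (fun u : ℕ => limUnder (V : Filter ℕ)
            (fun v => dist (x' a) (y' (Nat.pair u v)))) =
          (fun _ : ℕ => limUnder (V : Filter ℕ) (fun v => dist (x' a) (y v))) := by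
        refine funext fun u => congrArg _ (funext fun v => ?_)
        show dist (x' a) (y (Nat.unpair (Nat.pair u v)).2) = _
        rw [Nat.unpair_pair]
      rw [hconst, limUnder_const']
    rw [congrArg (limUnder (W : Filter ℕ)) (funext inner)]
    rw [hWdef, limUnder_pairUF U V _ R (fun p => abs_limUnder_le _ _ _ (fun v => hR _ _))]
    refine congrArg _ (funext fun u => ?_)
    have hconst : (fun v : ℕ => limUnder (V : Filter ℕ)
          (fun w => dist (x' (Nat.pair u v)) (y w))) =
        (fun _ : ℕ => limUnder (V : Filter ℕ) (fun w => dist (x u) (y w))) := by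
      refine funext fun v => congrArg _ (funext fun w => ?_)
      show dist (x (Nat.unpair (Nat.pair u v)).1) (y w) = _
      rw [Nat.unpair_pair]
    rw [hconst, limUnder_const']
  have hC2 : limUnder (W : Filter ℕ) (fun a => limUnder (W : Filter ℕ)
        (fun b => dist (x' b) (y' a))) =
      limUnder (V : Filter ℕ) (fun b => limUnder (U : Filter ℕ) (fun a => dist (x a) (y b))) := by
    have inner : ∀ a, limUnder (W : Filter ℕ) (fun b => dist (x' b) (y' a)) =
        limUnder (U : Filter ℕ) (fun u => dist (x u) (y' a)) := by
      intro a
      rw [hWdef, limUnder_pairUF U V _ R (fun p => hR _ _)]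
      refine congrArg _ (funext fun u => ?_)
      have hconst : (fun v : ℕ => dist (x' (Nat.pair u v)) (y' a)) =
          (fun _ : ℕ => dist (x u) (y' a)) := by
        refine funext fun v => ?_
        show dist (x (Nat.unpair (Nat.pair u v)).1) (y' a) = _
        rw [Nat.unpair_pair]
      rw [hconst, limUnder_const']
    rw [congrArg (limUnder (W : Filter ℕ)) (funext inner)]
    rw [hWdef, limUnder_pairUF U V _ R (fun p => abs_limUnder_le _ _ _ (fun u => hR _ _))]
    have houter : (fun u : ℕ => limUnder (V : Filter ℕ) (fun v => limUnder (U : Filter ℕ)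
          (fun u' => dist (x u') (y' (Nat.pair u v))))) =
        (fun _ : ℕ => limUnder (V : Filter ℕ) (fun v => limUnder (U : Filter ℕ)
          (fun u' => dist (x u') (y v)))) := by
      refine funext fun u => congrArg _ (funext fun v => congrArg _ (funext fun u' => ?_))
      show dist (x u') (y (Nat.unpair (Nat.pair u v)).2) = _
      rw [Nat.unpair_pair]
    rw [houter, limUnder_const']
  rw [← hC1, ← hC2]
  exact hE
end back

/-- Raynaud's characterization (i) ⇔ (iii): a metric space is stable iff iterated limits
along a single free ultrafilter are invariant under order-preserving permutations. -/
theorem stmt17 (M : Type*) [MetricSpace M] :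
    StableSpace M ↔
      ∀ l m : ℕ, 0 < l → 0 < m →
        ∀ (f : (Fin l → ℕ) → M) (g : (Fin m → ℕ) → M), IsBddMap f → IsBddMap g →
          ∀ U : Ultrafilter ℕ, FreeUF U →
            ∀ π : Equiv.Perm (Fin (l + m)), OrderPreservingPerm π →
              ultraLim (l + m) (fun _ => U)
                  (fun n => dist (f (fun i => n (Fin.castAdd m i)))
                    (g (fun j => n (Fin.natAdd l j)))) =
                ultraLim (l + m) (fun _ => U)
                  (fun n => dist (f (fun i => n (π (Fin.castAdd m i))))
                    (g (fun j => n (π (Fin.natAdd l j))))) := by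
  constructor
  · intro hM l m hl hm f g hf hg U hU π hπ
    exact forward_dir hM l m hl hm f g hf hg U hU π hπ
  · exact backward_dir
end
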